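/- arXiv:2311.01579 — 4 statements merged into one kernel-verified Lean document; each statement's English description precedes it below -/
import Mathlib

section
/- Let k ≥ 4 be fixed. There exists n_0 such that for all n ≥ n_0 with (k-1) | n, rex(n, K_3, P_k) = (n/(k-1))·C(k-1,3), where C(k-1,3) is the binomial coefficient; moreover, the unique (up to isomorphism) n-vertex regular P_k-free graph attaining this maximum is the disjoint union of n/(k-1) copies of the complete graph K_{k-1}. -/
open SimpleGraph

/-- The number of subgraphs of `G` isomorphic to `H` (the number of copies of `H` in `G`). -/
noncomputable def copyCount {W V : Type*} (H : SimpleGraph W) (G : SimpleGraph V) : ℕ :=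
  Nat.card {G' : G.Subgraph // Nonempty (G'.coe ≃g H)}

/-- `G` is `F`-free: it has no subgraph isomorphic to `F`. -/
def FreeOf {U V : Type*} (F : SimpleGraph U) (G : SimpleGraph V) : Prop :=
  ∀ G' : G.Subgraph, ¬ Nonempty (G'.coe ≃g F)

/-- `G` is regular: every vertex has the same degree. -/
def IsRegularGraph {V : Type*} (G : SimpleGraph V) : Prop :=
  ∃ d : ℕ, ∀ v : V, Nat.card (G.neighborSet v) = d

/-- `rex n H F`: the maximum number of copies of `H` in an `F`-free regular graph
on `n` vertices. -/
noncomputable def rex {W U : Type*} (n : ℕ) (H : SimpleGraph W) (F : SimpleGraph U) : ℕ :=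
  sSup {m : ℕ | ∃ G : SimpleGraph (Fin n), FreeOf F G ∧ IsRegularGraph G ∧ copyCount H G = m}

/-- The disjoint union of the family of graphs `f i`, on vertex set `ι × V`. -/
def disjUnion {ι V : Type*} (f : ι → SimpleGraph V) : SimpleGraph (ι × V) where
  Adj x y := x.1 = y.1 ∧ (f x.1).Adj x.2 y.2
  symm := ⟨fun _ _ h => ⟨h.1.symm, h.1 ▸ h.2.symm⟩⟩
  loopless := ⟨fun x h => (f x.1).loopless.irrefl x.2 h.2⟩

section AuxCopy
open Finset
variable {α β γ : Type*}

lemma exists_copy (F : SimpleGraph α) (G : SimpleGraph β) (f : α → β)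
    (hinj : Function.Injective f) (hadj : ∀ a b, F.Adj a b → G.Adj (f a) (f b)) :
    ∃ G' : G.Subgraph, Nonempty (G'.coe ≃g F) := by
  refine ⟨⟨Set.range f, fun x y => ∃ a b, F.Adj a b ∧ f a = x ∧ f b = y, ?_, ?_, ?_⟩, ?_⟩
  · rintro x y ⟨a, b, hab, rfl, rfl⟩; exact hadj a b hab
  · rintro x y ⟨a, b, hab, rfl, rfl⟩; exact ⟨a, rfl⟩
  · constructor; rintro x y ⟨a, b, hab, rfl, rfl⟩; exact ⟨b, a, hab.symm, rfl, rfl⟩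
  · refine ⟨⟨(Equiv.ofInjective f hinj).symm, ?_⟩⟩
    rintro ⟨x, hx⟩ ⟨y, hy⟩
    obtain ⟨a, rfl⟩ := hx
    obtain ⟨b, rfl⟩ := hy
    have ha : (Equiv.ofInjective f hinj).symm ⟨f a, ⟨a, rfl⟩⟩ = a := by
      apply hinj
      simpa using (Equiv.ofInjective f hinj).apply_symm_apply ⟨f a, ⟨a, rfl⟩⟩
    have hb : (Equiv.ofInjective f hinj).symm ⟨f b, ⟨b, rfl⟩⟩ = b := by
      apply hinj
      simpa using (Equiv.ofInjective f hinj).apply_symm_apply ⟨f b, ⟨b, rfl⟩⟩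
    simp only [ha, hb]
    constructor
    · intro h; exact ⟨a, b, h, rfl, rfl⟩
    · rintro ⟨a', b', hab, h1, h2⟩
      show F.Adj a b
      rwa [hinj h1, hinj h2] at hab

lemma copy_gives_inj (F : SimpleGraph α) (G : SimpleGraph β) (G' : G.Subgraph)
    (e : G'.coe ≃g F) :
    ∃ f : α → β, Function.Injective f ∧ ∀ a b, F.Adj a b → G.Adj (f a) (f b) := by
  refine ⟨fun a => (e.symm a : β), ?_, ?_⟩
  · intro a b h
    have := Subtype.ext h (p := (· ∈ G'.verts))
    simpa using congrArg e this
  · intro a b hab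
    have : G'.coe.Adj (e.symm a) (e.symm b) := by
      rw [e.symm.map_adj_iff] at *; exact hab
    exact G'.adj_sub this

lemma freeOf_iff (F : SimpleGraph α) (G : SimpleGraph β) :
    FreeOf F G ↔ ¬ ∃ f : α → β, Function.Injective f ∧
      ∀ a b, F.Adj a b → G.Adj (f a) (f b) := by
  constructor
  · rintro hfree ⟨f, hinj, hadj⟩
    obtain ⟨G', ⟨e⟩⟩ := exists_copy F G f hinj hadj
    exact hfree G' ⟨e⟩
  · rintro h G' ⟨e⟩
    exact h (copy_gives_inj F G G' e)

lemma freeOf_comap (F : SimpleGraph γ) (H : SimpleGraph β) (e : α ≃ β)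
    (h : FreeOf F H) : FreeOf F (H.comap e) := by
  rw [freeOf_iff] at h ⊢
  rintro ⟨f, hinj, hadj⟩
  exact h ⟨fun a => e (f a), fun a b hab => hinj (e.injective hab),
    fun a b hab => hadj a b hab⟩

end AuxCopy

section AuxCount
open Finset
variable {β : Type*} [Fintype β] [DecidableEq β]

lemma copyCount_triangle [Fintype β] [DecidableEq β] (G : SimpleGraph β) [DecidableRel G.Adj] :
    _root_.copyCount (⊤ : SimpleGraph (Fin 3)) G = (G.cliqueFinset 3).card := by
  classical
  have key : ∀ (G' : G.Subgraph), Nonempty (G'.coe ≃g (⊤ : SimpleGraph (Fin 3))) →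
      (G'.verts.ncard = 3 ∧ ∀ x y, G'.Adj x y ↔ (x ∈ G'.verts ∧ y ∈ G'.verts ∧ x ≠ y)) := by
    rintro G' ⟨e⟩
    constructor
    · have : Nat.card G'.verts = 3 := by
        rw [Nat.card_congr e.toEquiv]; simp
      rwa [Nat.card_coe_set_eq] at this
    · intro x y
      constructor
      · intro h
        exact ⟨G'.edge_vert h, G'.edge_vert h.symm, h.ne⟩
      · rintro ⟨hx, hy, hxy⟩
        have hne : e ⟨x, hx⟩ ≠ e ⟨y, hy⟩ := by
          intro h
          exact hxy (congrArg Subtype.val (e.injective h))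
        have : G'.coe.Adj ⟨x, hx⟩ ⟨y, hy⟩ := by
          rw [← e.map_adj_iff]; exact hne
        exact this
  -- the bijection to 3-cliques
  let Φ : {G' : G.Subgraph // Nonempty (G'.coe ≃g (⊤ : SimpleGraph (Fin 3)))} →
      {s : Finset β // s ∈ G.cliqueFinset 3} := fun ⟨G', h⟩ =>
    ⟨G'.verts.toFinset, by
      obtain ⟨h1, h2⟩ := key G' h
      rw [G.mem_cliqueFinset_iff]
      constructor
      · intro x hx y hy hxy
        simp only [Finset.mem_coe, Set.mem_toFinset] at hx hy
        exact G'.adj_sub ((h2 x y).2 ⟨hx, hy, hxy⟩)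
      · rw [Set.toFinset_card, ← Nat.card_eq_fintype_card, Nat.card_coe_set_eq]; exact h1⟩
  have hbij : Function.Bijective Φ := by
    constructor
    · rintro ⟨G1, h1⟩ ⟨G2, h2⟩ h
      have hv : G1.verts = G2.verts := by
        have := congrArg (fun s => (s : Finset β)) (Subtype.ext_iff.mp h)
        simpa [Φ, Set.toFinset_inj] using this
      refine Subtype.ext (SimpleGraph.Subgraph.ext hv ?_)
      ext x y
      rw [(key G1 h1).2, (key G2 h2).2, hv]
    · rintro ⟨s, hs⟩
      rw [G.mem_cliqueFinset_iff] at hs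
      refine ⟨⟨⟨(s : Set β), fun x y => x ∈ s ∧ y ∈ s ∧ x ≠ y, ?_, ?_, ?_⟩, ?_⟩, ?_⟩
      · rintro x y ⟨hx, hy, hxy⟩; exact hs.1 hx hy hxy
      · rintro x y ⟨hx, _, _⟩; exact hx
      · constructor; rintro x y ⟨hx, hy, hxy⟩; exact ⟨hy, hx, hxy.symm⟩
      · have hcard : Fintype.card {x // x ∈ (s : Set β)} = 3 := by
          simpa using hs.2
        have hequiv : {x // x ∈ (s : Set β)} ≃ Fin 3 := Fintype.equivFinOfCardEq hcard
        refine ⟨⟨hequiv, ?_⟩⟩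
        intro a b
        simp only [top_adj]
        constructor
        · intro h
          exact ⟨a.2, b.2, fun hv => h (congrArg hequiv (Subtype.ext hv))⟩
        · rintro ⟨_, _, hne⟩ heq
          exact hne (congrArg Subtype.val (hequiv.injective heq))
      · apply Subtype.ext
        simp [Φ]
  rw [_root_.copyCount, Nat.card_eq_of_bijective Φ hbij, Nat.card_eq_fintype_card,
    Fintype.card_coe]

variable (G : SimpleGraph β) [DecidableRel G.Adj]

lemma erase_mem_powerset {v : β} {s : Finset β}
    (hs : s ∈ (G.cliqueFinset 3).filter (fun s => v ∈ s)) :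
    s.erase v ∈ (G.neighborFinset v).powersetCard 2 := by
  rw [mem_filter, G.mem_cliqueFinset_iff] at hs
  obtain ⟨⟨hc, hcard⟩, hv⟩ := hs
  rw [mem_powersetCard]
  constructor
  · intro x hx
    rw [mem_erase] at hx
    rw [mem_neighborFinset]
    exact hc hv (by exact hx.2) (Ne.symm hx.1)
  · rw [card_erase_of_mem hv, hcard]

lemma filtercard_le (v : β) :
    ((G.cliqueFinset 3).filter (fun s => v ∈ s)).card ≤ (G.degree v).choose 2 := by
  have := Finset.card_le_card_of_injOn (fun s => s.erase v)
    (fun s hs => erase_mem_powerset G hs) ?_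
  · simpa [Finset.card_powersetCard, card_neighborFinset_eq_degree] using this
  · intro s hs t ht h
    rw [coe_filter, Set.mem_setOf_eq] at hs ht
    have h' : s.erase v = t.erase v := h
    rw [← insert_erase hs.2, h', insert_erase ht.2]

lemma filtercard_eq {v : β}
    (h : ((G.cliqueFinset 3).filter (fun s => v ∈ s)).card = (G.degree v).choose 2)
    {x y : β} (hx : G.Adj v x) (hy : G.Adj v y) (hxy : x ≠ y) : G.Adj x y := by
  have hmem : ({x, y} : Finset β) ∈ (G.neighborFinset v).powersetCard 2 := by
    rw [mem_powersetCard]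
    refine ⟨?_, by rw [card_insert_of_notMem (by simpa using hxy), card_singleton]⟩
    intro z hz
    rw [mem_insert, mem_singleton] at hz
    rcases hz with rfl | rfl <;> rwa [mem_neighborFinset]
  have hcard : ((G.neighborFinset v).powersetCard 2).card ≤
      ((G.cliqueFinset 3).filter (fun s => v ∈ s)).card := by
    rw [h, Finset.card_powersetCard, card_neighborFinset_eq_degree]
  obtain ⟨s, hs, hsv⟩ := Finset.surj_on_of_inj_on_of_card_le
    (f := fun s _ => s.erase v) (fun s hs => erase_mem_powerset G hs)
    (fun s t hs ht hst => by
      rw [mem_filter] at hs ht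
      have h' : s.erase v = t.erase v := hst
      rw [← insert_erase hs.2, h', insert_erase ht.2])
    hcard _ hmem
  rw [mem_filter, G.mem_cliqueFinset_iff] at hs
  have hxs : x ∈ s := by
    have : x ∈ s.erase v := by rw [← hsv]; simp
    exact (mem_erase.mp this).2
  have hys : y ∈ s := by
    have : y ∈ s.erase v := by rw [← hsv]; simp
    exact (mem_erase.mp this).2
  exact hs.1.1 hxs hys hxy

lemma triple_count :
    3 * (G.cliqueFinset 3).card =
      ∑ v : β, ((G.cliqueFinset 3).filter (fun s => v ∈ s)).card := by
  have : ∀ v : β, ((G.cliqueFinset 3).filter (fun s => v ∈ s)).card =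
      ∑ s ∈ G.cliqueFinset 3, if v ∈ s then 1 else 0 := by
    intro v; rw [Finset.card_filter]
  simp_rw [this]
  rw [Finset.sum_comm]
  have : ∀ s ∈ G.cliqueFinset 3, (∑ v : β, if v ∈ s then 1 else 0) = 3 := by
    intro s hs
    rw [G.mem_cliqueFinset_iff] at hs
    rw [Finset.sum_ite_mem, Finset.univ_inter, Finset.sum_const, hs.2]; simp
  rw [Finset.sum_congr rfl this, Finset.sum_const, smul_eq_mul, mul_comm]

lemma exists_max_path (G : SimpleGraph β) [Nonempty β] :
    ∃ (u v : β) (p : G.Walk u v), p.IsPath ∧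
      ∀ (u' v' : β) (q : G.Walk u' v'), q.IsPath → q.length ≤ p.length := by
  classical
  set S : Set ℕ := {m | ∃ (u v : β) (p : G.Walk u v), p.IsPath ∧ p.length = m} with hS
  have hne : S.Nonempty := by
    obtain ⟨v⟩ := ‹Nonempty β›
    exact ⟨0, v, v, Walk.nil, Walk.IsPath.nil, rfl⟩
  have hbdd : BddAbove S := by
    refine ⟨Fintype.card β, ?_⟩
    rintro m ⟨u, v, p, hp, rfl⟩
    exact le_of_lt hp.length_lt
  obtain ⟨u, v, p, hp, hlen⟩ := Nat.sSup_mem hne hbdd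
  refine ⟨u, v, p, hp, ?_⟩
  intro u' v' q hq
  rw [hlen]
  exact le_csSup hbdd ⟨u', v', q, hq, rfl⟩

lemma degree_le_max_path (G : SimpleGraph β) [DecidableRel G.Adj] {d : ℕ}
    (hreg : ∀ v, G.degree v = d) {u v : β} (p : G.Walk u v) (hp : p.IsPath)
    (hmax : ∀ (u' v' : β) (q : G.Walk u' v'), q.IsPath → q.length ≤ p.length) :
    d ≤ p.length := by
  classical
  have hsub : G.neighborFinset u ⊆ p.support.toFinset.erase u := by
    intro x hx
    rw [mem_neighborFinset] at hx
    rw [mem_erase, List.mem_toFinset]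
    refine ⟨hx.ne', ?_⟩
    by_contra hxs
    have hcons : (Walk.cons hx.symm p).IsPath := by
      rw [Walk.cons_isPath_iff]; exact ⟨hp, hxs⟩
    have := hmax _ _ _ hcons
    simp at this
  have := Finset.card_le_card hsub
  rw [card_neighborFinset_eq_degree, hreg] at this
  have hcard : p.support.toFinset.card = p.length + 1 := by
    rw [List.toFinset_card_of_nodup hp.support_nodup, Walk.length_support]
  have hu : u ∈ p.support.toFinset := by simp
  rw [Finset.card_erase_of_mem hu, hcard] at this
  simpa using this

lemma chain'_get_adj {R : β → β → Prop} {l : List β} (h : List.Chain' R l)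
    {i j : ℕ} (hi : i < l.length) (hj : j < l.length) (hij : j = i + 1) :
    R (l.get ⟨i, hi⟩) (l.get ⟨j, hj⟩) := by
  subst hij
  exact List.isChain_iff_getElem.mp h i (by omega)

lemma exists_path_map (G : SimpleGraph β) {u v : β} (p : G.Walk u v) (hp : p.IsPath)
    {k : ℕ} (hk : k ≤ p.length + 1) :
    ∃ f : Fin k → β, Function.Injective f ∧
      ∀ a b, (pathGraph k).Adj a b → G.Adj (f a) (f b) := by
  classical
  have hlen : p.support.length = p.length + 1 := Walk.length_support p
  refine ⟨fun i => p.support.get ⟨i, by omega⟩, ?_, ?_⟩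
  · intro a b hab
    have := List.nodup_iff_injective_get.mp hp.support_nodup hab
    exact Fin.ext (by simpa using congrArg Fin.val this)
  · intro a b hab
    rw [pathGraph_adj] at hab
    have hchain := Walk.isChain_adj_support p
    rcases hab with h | h
    · exact chain'_get_adj hchain _ _ (by omega)
    · exact (chain'_get_adj hchain _ _ (by omega)).symm

end AuxCount

section AuxDU
open Finset

/-- Disjoint union of `N` copies of `K_K`. -/
def DU (N K : ℕ) : SimpleGraph (Fin N × Fin K) :=
  disjUnion (fun _ : Fin N => (⊤ : SimpleGraph (Fin K)))

lemma DU_adj {N K : ℕ} {x y : Fin N × Fin K} :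
    (DU N K).Adj x y ↔ x.1 = y.1 ∧ x.2 ≠ y.2 := Iff.rfl

lemma DU_neighborSet {N K : ℕ} (x : Fin N × Fin K) :
    Nat.card ((DU N K).neighborSet x) = K - 1 := by
  classical
  have : (DU N K).neighborSet x = (fun j => (x.1, j)) '' {x.2}ᶜ := by
    ext y
    simp only [mem_neighborSet, DU_adj, Set.mem_image, Set.mem_compl_iff,
      Set.mem_singleton_iff]
    constructor
    · rintro ⟨h1, h2⟩
      exact ⟨y.2, Ne.symm h2, by rw [h1]⟩
    · rintro ⟨j, hj, rfl⟩
      exact ⟨rfl, Ne.symm hj⟩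
  rw [this, Nat.card_coe_set_eq,
    Set.ncard_image_of_injective _ (by intro a b h; simpa using h)]
  rw [Set.ncard_eq_toFinset_card']
  simp [Finset.card_compl]

lemma DU_walk_fst {N K : ℕ} {x y : Fin N × Fin K} (w : (DU N K).Walk x y) :
    x.1 = y.1 := by
  induction w with
  | nil => rfl
  | cons h _ ih => exact h.1.trans ih

instance {N K : ℕ} : DecidableRel (DU N K).Adj :=
  fun x y => inferInstanceAs (Decidable (x.1 = y.1 ∧ x.2 ≠ y.2))

lemma DU_cliqueCard {N K : ℕ} :
    ((DU N K).cliqueFinset 3).card = N * Nat.choose K 3 := by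
  classical
  have hrhs : ((Finset.univ : Finset (Fin N)) ×ˢ
      (Finset.univ : Finset (Fin K)).powersetCard 3).card = N * Nat.choose K 3 := by
    simp [Finset.card_powersetCard]
  rw [← hrhs]
  symm
  apply Finset.card_bij (fun (ct : Fin N × Finset (Fin K)) _ =>
    ct.2.map ⟨fun j => (ct.1, j), fun a b h => by simpa using h⟩)
  · rintro ⟨c, t⟩ hct
    simp only [Finset.mem_product, Finset.mem_powersetCard] at hct
    rw [SimpleGraph.mem_cliqueFinset_iff]
    constructor
    · rintro x hx y hy hxy
      simp only [Finset.coe_map, Set.mem_image, Finset.mem_coe,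
        Function.Embedding.coeFn_mk] at hx hy
      obtain ⟨i, _, rfl⟩ := hx
      obtain ⟨j, _, rfl⟩ := hy
      exact ⟨rfl, fun h => hxy (Prod.ext rfl h)⟩
    · rw [Finset.card_map, hct.2.2]
  · rintro ⟨c, t⟩ hct ⟨c', t'⟩ hct' h
    simp only [Finset.mem_product, Finset.mem_powersetCard] at hct hct'
    have htne : t.Nonempty := by
      apply Finset.card_pos.mp; rw [hct.2.2]; norm_num
    obtain ⟨j, hj⟩ := htne
    have : (c, j) ∈ t'.map ⟨fun j => (c', j), fun a b hab => by simpa using hab⟩ := by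
      rw [← h]; exact Finset.mem_map_of_mem _ hj
    simp only [Finset.mem_map, Function.Embedding.coeFn_mk] at this
    obtain ⟨j', _, hj'⟩ := this
    have hcc : c = c' := (congrArg Prod.fst hj').symm
    subst hcc
    have : t = t' := by
      have := Finset.map_injective (⟨fun j => (c, j), fun a b h => by simpa using h⟩ :
        Fin K ↪ Fin N × Fin K) h
      exact this
    rw [this]
  · intro s hs
    rw [SimpleGraph.mem_cliqueFinset_iff] at hs
    have hne : s.Nonempty := by
      apply Finset.card_pos.mp; rw [hs.2]; norm_num
    obtain ⟨x, hx⟩ := hne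
    have hfst : ∀ y ∈ s, y.1 = x.1 := by
      intro y hy
      by_cases hxy : y = x
      · rw [hxy]
      · exact (hs.1 hy hx hxy).1
    refine ⟨⟨x.1, s.image Prod.snd⟩, ?_, ?_⟩
    · simp only [Finset.mem_product, Finset.mem_powersetCard]
      refine ⟨Finset.mem_univ _, fun j _ => Finset.mem_univ _, ?_⟩
      rw [Finset.card_image_of_injOn, hs.2]
      intro a ha b hb hab
      exact Prod.ext ((hfst a ha).trans (hfst b hb).symm) hab
    · ext y
      simp only [Finset.mem_map, Finset.mem_image, Function.Embedding.coeFn_mk]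
      constructor
      · rintro ⟨j, ⟨z, hz, rfl⟩, rfl⟩
        change (x.1, z.2) ∈ s
        rwa [show (x.1, z.2) = z from Prod.ext (hfst z hz).symm rfl]
      · intro hy
        exact ⟨y.2, ⟨y, hy, rfl⟩, Prod.ext (hfst y hy).symm rfl⟩

lemma DU_free_path {N K k : ℕ} (hKk : K < k) : FreeOf (pathGraph k) (DU N K) := by
  rw [freeOf_iff]
  rintro ⟨f, hinj, hadj⟩
  have hfst : ∀ a b : Fin k, (f a).1 = (f b).1 := by
    have key : ∀ {a b : Fin k} (_ : (pathGraph k).Walk a b), (f a).1 = (f b).1 := by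
      intro a b w
      induction w with
      | nil => rfl
      | cons h _ ih => exact (DU_adj.mp (hadj _ _ h)).1.trans ih
    intro a b
    obtain ⟨w⟩ := pathGraph_preconnected k a b
    exact key w
  have hg : Function.Injective (fun a : Fin k => (f a).2) := by
    intro a b hab
    apply hinj
    exact Prod.ext (hfst a b) hab
  have := Fintype.card_le_of_injective _ hg
  simp only [Fintype.card_fin] at this
  omega

lemma regular_comap {α β : Type*} {d : ℕ} (H : SimpleGraph β) (e : α ≃ β)
    (h : ∀ v : β, Nat.card (H.neighborSet v) = d) :
    ∀ v : α, Nat.card ((H.comap e).neighborSet v) = d := by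
  intro v
  have hset : (H.comap e).neighborSet v = e ⁻¹' (H.neighborSet (e v)) := rfl
  rw [hset, ← Equiv.image_symm_eq_preimage, Nat.card_coe_set_eq,
    Set.ncard_image_of_injective _ e.symm.injective, ← Nat.card_coe_set_eq]
  exact h (e v)

lemma cliqueFinset_comap {α β : Type*} [Fintype α] [Fintype β] [DecidableEq α] [DecidableEq β]
    (H : SimpleGraph β) [DecidableRel H.Adj] (e : α ≃ β) :
    ((H.comap e).cliqueFinset 3).card = (H.cliqueFinset 3).card := by
  classical
  apply Finset.card_bij (fun (s : Finset α) _ => s.map e.toEmbedding)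
  · intro s hs
    rw [SimpleGraph.mem_cliqueFinset_iff] at hs ⊢
    constructor
    · rintro x hx y hy hxy
      simp only [Finset.coe_map, Set.mem_image, Finset.mem_coe,
        Equiv.coe_toEmbedding] at hx hy
      obtain ⟨a, ha, rfl⟩ := hx
      obtain ⟨b, hb, rfl⟩ := hy
      exact hs.1 ha hb (fun h => hxy (by rw [h]))
    · rw [Finset.card_map]; exact hs.2
  · intro s hs t ht h
    exact Finset.map_injective _ h
  · intro t ht
    rw [SimpleGraph.mem_cliqueFinset_iff] at ht
    refine ⟨t.map e.symm.toEmbedding, ?_, ?_⟩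
    · rw [SimpleGraph.mem_cliqueFinset_iff]
      constructor
      · rintro x hx y hy hxy
        simp only [Finset.coe_map, Set.mem_image, Finset.mem_coe,
          Equiv.coe_toEmbedding] at hx hy
        obtain ⟨a, ha, rfl⟩ := hx
        obtain ⟨b, hb, rfl⟩ := hy
        have : H.Adj a b := ht.1 ha hb (fun h => hxy (by rw [h]))
        show H.Adj (e (e.symm a)) (e (e.symm b))
        simpa using this
      · rw [Finset.card_map]; exact ht.2
    · ext x
      simp only [Finset.mem_map, Equiv.coe_toEmbedding]
      constructor
      · rintro ⟨a, ⟨b, hb, rfl⟩, rfl⟩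
        simpa using hb
      · intro hx
        exact ⟨e.symm x, ⟨x, hx, rfl⟩, by simp⟩

variable {β : Type*} [Fintype β] [DecidableEq β]

lemma iso_DU (G : SimpleGraph β) [DecidableRel G.Adj] {K N : ℕ} (hK : 1 ≤ K)
    (hcard : Fintype.card β = N * K) (hdeg : ∀ v, G.degree v = K - 1)
    (hclique : ∀ v x y, G.Adj v x → G.Adj v y → x ≠ y → G.Adj x y) :
    Nonempty (G ≃g DU N K) := by
  classical
  have hreach : ∀ u v : β, G.Reachable u v ↔ (u = v ∨ G.Adj u v) := by
    intro u v
    constructor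
    · rintro ⟨w⟩
      induction w with
      | nil => exact Or.inl rfl
      | @cons a b c hab p ih =>
        rcases ih with rfl | hbc
        · exact Or.inr hab
        · by_cases hac : a = c
          · exact Or.inl hac
          · exact Or.inr (hclique b a c hab.symm hbc hac)
    · rintro (rfl | h)
      · exact Reachable.refl _
      · exact h.reachable
  set comp : β → G.ConnectedComponent := G.connectedComponentMk with hcomp
  -- each fiber has K elements
  have hfiber : ∀ c : G.ConnectedComponent, Fintype.card {v // comp v = c} = K := by
    intro c
    obtain ⟨v₀, rfl⟩ := c.exists_rep
    rw [Fintype.card_subtype]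
    have : Finset.univ.filter (fun v => comp v = comp v₀) =
        insert v₀ (G.neighborFinset v₀) := by
      ext v
      simp only [Finset.mem_filter, Finset.mem_univ, true_and, Finset.mem_insert,
        mem_neighborFinset]
      rw [hcomp, ConnectedComponent.eq, hreach]
      constructor
      · rintro (rfl | h); exacts [Or.inl rfl, Or.inr h.symm]
      · rintro (rfl | h); exacts [Or.inl rfl, Or.inr h.symm]
    have h2 : #(Finset.univ.filter (fun v => comp v = comp v₀)) = K := by
      rw [this, Finset.card_insert_of_notMem (by simp), card_neighborFinset_eq_degree, hdeg]
      omega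
    exact h2
  -- the number of components is N
  have hNcc : Fintype.card G.ConnectedComponent = N := by
    have h1 : Fintype.card β = ∑ c : G.ConnectedComponent, Fintype.card {v // comp v = c} := by
      rw [← Fintype.card_sigma]
      exact Fintype.card_congr (Equiv.sigmaFiberEquiv comp).symm
    rw [hcard] at h1
    simp_rw [hfiber] at h1
    rw [Finset.sum_const, smul_eq_mul, Finset.card_univ] at h1
    exact (Nat.eq_of_mul_eq_mul_right (by omega) h1.symm)
  have gcc : G.ConnectedComponent ≃ Fin N := Fintype.equivFinOfCardEq hNcc
  have hc : ∀ c : G.ConnectedComponent, {v // comp v = c} ≃ Fin K :=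
    fun c => Fintype.equivFinOfCardEq (hfiber c)
  let E : β ≃ Fin N × Fin K :=
    (Equiv.sigmaFiberEquiv comp).symm.trans ((Equiv.sigmaCongrRight hc).trans
      ((Equiv.sigmaEquivProd _ _).trans (Equiv.prodCongr gcc (Equiv.refl _))))
  have hE1 : ∀ v, (E v).1 = gcc (comp v) := fun v => rfl
  refine ⟨⟨E, ?_⟩⟩
  intro u v
  rw [DU_adj]
  constructor
  · rintro ⟨hf, hs⟩
    rw [hE1, hE1] at hf
    have hcc : comp u = comp v := gcc.injective hf
    have := (hreach u v).mp (ConnectedComponent.exact hcc)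
    rcases this with rfl | h
    · exact absurd rfl hs
    · exact h
  · intro h
    have hcc : comp u = comp v := ConnectedComponent.sound h.reachable
    refine ⟨by rw [hE1, hE1, hcc], ?_⟩
    intro hs
    have : E u = E v := Prod.ext (by rw [hE1, hE1, hcc]) hs
    exact G.loopless.irrefl u (E.injective this ▸ h)

end AuxDU


/-- For fixed `k ≥ 4` and all sufficiently large `n` divisible by `k-1`,
`rex(n, K₃, P_k) = (n/(k-1))·C(k-1,3)`, and the unique extremal graph is the disjoint
union of `n/(k-1)` copies of `K_{k-1}`. -/
theorem rex_triangle_path_div (k : ℕ) (hk : 4 ≤ k) :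
    ∃ n₀ : ℕ, ∀ n : ℕ, n₀ ≤ n → (k - 1) ∣ n →
      rex n (⊤ : SimpleGraph (Fin 3)) (pathGraph k) = (n / (k - 1)) * Nat.choose (k - 1) 3 ∧
      ∀ G : SimpleGraph (Fin n), FreeOf (pathGraph k) G → IsRegularGraph G →
        _root_.copyCount (⊤ : SimpleGraph (Fin 3)) G = rex n (⊤ : SimpleGraph (Fin 3)) (pathGraph k) →
        Nonempty (G ≃g disjUnion (fun _ : Fin (n / (k - 1)) => (⊤ : SimpleGraph (Fin (k - 1))))) := by
  classical
  refine ⟨k, fun n hn hdvd => ?_⟩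
  set K := k - 1 with hKdef
  have hK3 : 3 ≤ K := by omega
  set N := n / K with hNdef
  have hnNK : n = N * K := by rw [hNdef, Nat.div_mul_cancel hdvd]
  set B := N * Nat.choose K 3 with hBdef
  have hid : K * Nat.choose (K-1) 2 = Nat.choose K 3 * 3 := by
    have h := Nat.add_one_mul_choose_eq (K-1) 2
    rw [show (K-1) + 1 = K from by omega] at h
    simpa using h
  have h3B : 3 * B = n * Nat.choose (K-1) 2 := by
    calc 3 * B = N * (Nat.choose K 3 * 3) := by rw [hBdef]; ring
    _ = N * (K * Nat.choose (K-1) 2) := by rw [hid]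
    _ = (N * K) * Nat.choose (K-1) 2 := by ring
    _ = n * Nat.choose (K-1) 2 := by rw [← hnNK]
  haveI : Nonempty (Fin n) := ⟨⟨0, by omega⟩⟩
  have key : ∀ G : SimpleGraph (Fin n), FreeOf (pathGraph k) G → IsRegularGraph G →
      _root_.copyCount (⊤ : SimpleGraph (Fin 3)) G ≤ B ∧
      (_root_.copyCount (⊤ : SimpleGraph (Fin 3)) G = B → Nonempty (G ≃g DU N K)) := by
    intro G hfree hreg
    letI : DecidableRel G.Adj := Classical.decRel _
    obtain ⟨d, hd⟩ := hreg
    have hdeg : ∀ v, G.degree v = d := by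
      intro v
      rw [← hd v, Nat.card_eq_fintype_card, card_neighborSet_eq_degree]
    have hdK : d ≤ K - 1 := by
      by_contra hcon
      push_neg at hcon
      obtain ⟨u, v, p, hp, hmax⟩ := exists_max_path G
      have hdl := degree_le_max_path G hdeg p hp hmax
      obtain ⟨f, hinj, hadj⟩ := exists_path_map G p hp (k := k) (by omega)
      exact (freeOf_iff (pathGraph k) G).mp hfree ⟨f, hinj, hadj⟩
    have hT := copyCount_triangle G
    have hcount : ∀ v, ((G.cliqueFinset 3).filter (fun s => v ∈ s)).card ≤ Nat.choose d 2 := by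
      intro v
      have := filtercard_le G v
      rwa [hdeg] at this
    have hsum : 3 * (G.cliqueFinset 3).card ≤ n * Nat.choose d 2 := by
      rw [triple_count G]
      calc ∑ v : Fin n, ((G.cliqueFinset 3).filter (fun s => v ∈ s)).card
          ≤ ∑ _v : Fin n, Nat.choose d 2 := Finset.sum_le_sum (fun v _ => hcount v)
        _ = n * Nat.choose d 2 := by
            rw [Finset.sum_const, Finset.card_univ, Fintype.card_fin, smul_eq_mul]
    have hmono : Nat.choose d 2 ≤ Nat.choose (K-1) 2 := Nat.choose_le_choose 2 hdK
    have hupper : _root_.copyCount (⊤ : SimpleGraph (Fin 3)) G ≤ B := by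
      have h1 : n * Nat.choose d 2 ≤ n * Nat.choose (K-1) 2 :=
        Nat.mul_le_mul_left n hmono
      rw [hT]
      omega
    refine ⟨hupper, ?_⟩
    intro heq
    rw [hT] at heq
    have hdeq : d = K - 1 := by
      by_contra hne
      have hdlt : d ≤ K - 2 := by omega
      have hstrict : Nat.choose d 2 < Nat.choose (K-1) 2 := by
        have h1 : Nat.choose d 2 ≤ Nat.choose (K-2) 2 := Nat.choose_le_choose 2 hdlt
        have h2 : Nat.choose (K-1) 2 = Nat.choose (K-2) 1 + Nat.choose (K-2) 2 := by
          have h3 := Nat.choose_succ_succ' (K-2) 1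
          rwa [show K - 2 + 1 = K - 1 by omega] at h3
        have h4 : Nat.choose (K-2) 1 = K - 2 := Nat.choose_one_right _
        omega
      have hlt : n * Nat.choose d 2 < n * Nat.choose (K-1) 2 :=
        mul_lt_mul_of_pos_left hstrict (show 0 < n by omega)
      omega
    have hconst : ∑ _v : Fin n, Nat.choose (K-1) 2 = n * Nat.choose (K-1) 2 := by
      rw [Finset.sum_const, Finset.card_univ, Fintype.card_fin, smul_eq_mul]
    have hsum_eq : ∑ v : Fin n, ((G.cliqueFinset 3).filter (fun s => v ∈ s)).card
        = ∑ _v : Fin n, Nat.choose (K-1) 2 := by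
      rw [← triple_count G, heq, h3B, hconst]
    have hle : ∀ v ∈ Finset.univ, ((G.cliqueFinset 3).filter (fun s => v ∈ s)).card
        ≤ Nat.choose (K-1) 2 := by
      intro v _
      have := filtercard_le G v
      rwa [hdeg, hdeq] at this
    have hper := (Finset.sum_eq_sum_iff_of_le hle).mp hsum_eq
    have hclique : ∀ v x y : Fin n, G.Adj v x → G.Adj v y → x ≠ y → G.Adj x y := by
      intro v x y hx hy hxy
      refine filtercard_eq G ?_ hx hy hxy
      rw [hdeg, hdeq]
      exact hper v (Finset.mem_univ v)
    exact iso_DU G (by omega) (by rw [Fintype.card_fin]; exact hnNK)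
      (fun v => by rw [hdeg, hdeq]) hclique
  -- the extremal construction
  let e : Fin n ≃ Fin N × Fin K := (finCongr hnNK).trans finProdFinEquiv.symm
  let Gn : SimpleGraph (Fin n) := (DU N K).comap e
  have hGnfree : FreeOf (pathGraph k) Gn := freeOf_comap _ _ e (DU_free_path (by omega))
  have hGnreg : IsRegularGraph Gn := ⟨K - 1, regular_comap _ e (fun x => DU_neighborSet x)⟩
  have hGncount : _root_.copyCount (⊤ : SimpleGraph (Fin 3)) Gn = B := by
    rw [copyCount_triangle Gn]
    calc (Gn.cliqueFinset 3).card = ((DU N K).cliqueFinset 3).card :=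
          cliqueFinset_comap (DU N K) e
      _ = N * Nat.choose K 3 := DU_cliqueCard
  have hrex : rex n (⊤ : SimpleGraph (Fin 3)) (pathGraph k) = B := by
    unfold rex
    apply IsGreatest.csSup_eq
    constructor
    · exact ⟨Gn, hGnfree, hGnreg, hGncount⟩
    · rintro m ⟨G, h1, h2, rfl⟩
      exact (key G h1 h2).1
  refine ⟨hrex, ?_⟩
  intro G h1 h2 h3
  rw [hrex] at h3
  exact (key G h1 h2).2 h3
end

section
/- For every positive integer r and every integer g ≥ 3 there exists n_0 such that for all n ≥ n_0 with n·r even, there exists an n-vertex r-regular graph with girth at least g. -/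
open SimpleGraph

namespace ES

variable {V : Type*}

/-- every cycle has length at least `g` -/
def HG (g : ℕ) (H : SimpleGraph V) : Prop :=
  ∀ ⦃u : V⦄ (w : H.Walk u u), w.IsCycle → g ≤ w.length

/-- add one edge -/
def addE (H : SimpleGraph V) (a b : V) : SimpleGraph V := H ⊔ fromEdgeSet {s(a,b)}

lemma le_addE (H : SimpleGraph V) (a b : V) : H ≤ addE H a b := le_sup_left

lemma addE_adj {H : SimpleGraph V} {a b : V} (hab : a ≠ b) {p q : V} :
    (addE H a b).Adj p q ↔ H.Adj p q ∨ s(p,q) = s(a,b) := by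
  simp only [addE, sup_adj, fromEdgeSet_adj, Set.mem_singleton_iff]
  constructor
  · rintro (h | ⟨h, -⟩)
    · exact Or.inl h
    · exact Or.inr h
  · rintro (h | h)
    · exact Or.inl h
    · refine Or.inr ⟨h, ?_⟩
      rintro rfl
      rw [Sym2.eq_iff] at h
      rcases h with ⟨rfl, rfl⟩ | ⟨rfl, rfl⟩ <;> exact hab rfl

lemma edgeSet_addE {H : SimpleGraph V} {a b : V} (hab : a ≠ b) :
    (addE H a b).edgeSet = insert s(a,b) H.edgeSet := by
  rw [addE, edgeSet_sup, edgeSet_fromEdgeSet]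
  rw [Set.union_comm]
  congr 1
  ext e
  simp only [Set.mem_diff, Set.mem_singleton_iff, Set.mem_setOf_eq]
  constructor
  · rintro ⟨rfl, -⟩; rfl
  · rintro rfl
    exact ⟨rfl, by simp [hab]⟩

lemma neighborSet_addE [DecidableEq V] {H : SimpleGraph V} {a b : V} (hab : a ≠ b) (w : V) :
    (addE H a b).neighborSet w =
      if w = a then insert b (H.neighborSet w)
      else if w = b then insert a (H.neighborSet w)
      else H.neighborSet w := by
  ext u
  simp only [mem_neighborSet, addE_adj hab]
  by_cases hwa : w = a
  · subst hwa
    simp only [if_pos rfl, Set.mem_insert_iff, mem_neighborSet]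
    constructor
    · rintro (h | h)
      · exact Or.inr h
      · rw [Sym2.eq_iff] at h
        rcases h with ⟨-, rfl⟩ | ⟨h1, rfl⟩
        · exact Or.inl rfl
        · exact absurd h1 hab
    · rintro (rfl | h)
      · exact Or.inr rfl
      · exact Or.inl h
  · rw [if_neg hwa]
    by_cases hwb : w = b
    · subst hwb
      simp only [if_pos rfl, Set.mem_insert_iff, mem_neighborSet]
      constructor
      · rintro (h | h)
        · exact Or.inr h
        · rw [Sym2.eq_iff] at h
          rcases h with ⟨h1, -⟩ | ⟨-, rfl⟩
          · exact absurd h1.symm hab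
          · exact Or.inl rfl
      · rintro (rfl | h)
        · exact Or.inr (by rw [Sym2.eq_swap])
        · exact Or.inl h
    · rw [if_neg hwb]
      constructor
      · rintro (h | h)
        · exact h
        · rw [Sym2.eq_iff] at h
          rcases h with ⟨h1, -⟩ | ⟨h1, -⟩
          · exact absurd h1 hwa
          · exact absurd h1 hwb
      · exact Or.inl

lemma neighborSet_delE [DecidableEq V] {G : SimpleGraph V} {x y : V} (w : V) :
    (G.deleteEdges {s(x,y)}).neighborSet w =
      if w = x then G.neighborSet w \ {y}
      else if w = y then G.neighborSet w \ {x}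
      else G.neighborSet w := by
  ext u
  simp only [mem_neighborSet, deleteEdges_adj, Set.mem_singleton_iff]
  by_cases hwx : w = x
  · subst hwx
    simp only [if_pos rfl, Set.mem_diff, mem_neighborSet, Set.mem_singleton_iff]
    constructor
    · rintro ⟨h, hne⟩
      refine ⟨h, fun h' => hne ?_⟩
      subst h'; rfl
    · rintro ⟨h, hne⟩
      refine ⟨h, fun h' => ?_⟩
      rw [Sym2.eq_iff] at h'
      rcases h' with ⟨-, rfl⟩ | ⟨rfl, rfl⟩
      · exact hne rfl
      · exact G.irrefl h
  · rw [if_neg hwx]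
    by_cases hwy : w = y
    · subst hwy
      simp only [if_pos rfl, Set.mem_diff, mem_neighborSet, Set.mem_singleton_iff]
      constructor
      · rintro ⟨h, hne⟩
        refine ⟨h, fun h' => hne ?_⟩
        subst h'; exact Sym2.eq_swap
      · rintro ⟨h, hne⟩
        refine ⟨h, fun h' => ?_⟩
        rw [Sym2.eq_iff] at h'
        rcases h' with ⟨rfl, rfl⟩ | ⟨-, rfl⟩
        · exact G.irrefl h
        · exact hne rfl
    · rw [if_neg hwy]
      constructor
      · rintro ⟨h, -⟩; exact h
      · intro h
        refine ⟨h, fun h' => ?_⟩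
        rw [Sym2.eq_iff] at h'
        rcases h' with ⟨rfl, -⟩ | ⟨rfl, -⟩
        · exact hwx rfl
        · exact hwy rfl


/-- If a path starts at `u` and contains an edge `s(u,b)`, that edge is its first edge. -/
lemma path_first_edge {H : SimpleGraph V} {u w b : V} (p : H.Walk u w) (hp : p.IsPath)
    (he : s(u,b) ∈ p.edges) :
    ∃ (h : H.Adj u b) (q : H.Walk b w), p = Walk.cons h q := by
  cases p with
  | nil => simp at he
  | @cons _ u' _ h' q' =>
    rw [Walk.edges_cons, List.mem_cons] at he
    rcases he with he | he
    · rw [Sym2.eq_iff] at he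
      rcases he with ⟨-, rfl⟩ | ⟨h1, rfl⟩
      · exact ⟨h', q', rfl⟩
      · exact absurd h1 h'.ne
    · exfalso
      rw [Walk.cons_isPath_iff] at hp
      exact hp.2 (q'.fst_mem_support_of_mem_edges he)

/-- Split a walk at an edge it contains. -/
lemma walk_split_at_edge {H : SimpleGraph V} {c d : V} :
    ∀ {s t : V} (w : H.Walk s t), s(c,d) ∈ w.edges →
    (∃ (w1 : H.Walk s c) (w2 : H.Walk d t),
        w1.edges ++ s(c,d) :: w2.edges = w.edges ∧ w1.length + w2.length + 1 = w.length)
    ∨ (∃ (w1 : H.Walk s d) (w2 : H.Walk c t),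
        w1.edges ++ s(c,d) :: w2.edges = w.edges ∧ w1.length + w2.length + 1 = w.length) := by
  intro s t w
  induction w with
  | nil => intro he; simp at he
  | @cons s u t h p ih =>
    intro he
    rw [Walk.edges_cons, List.mem_cons] at he
    by_cases hfirst : s(s,u) = s(c,d)
    · rw [Sym2.eq_iff] at hfirst
      rcases hfirst with ⟨rfl, rfl⟩ | ⟨rfl, rfl⟩
      · left
        exact ⟨Walk.nil, p, by simp, by simp⟩
      · right
        exact ⟨Walk.nil, p, by simp [Sym2.eq_swap], by simp⟩
    · have he' : s(c,d) ∈ p.edges := by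
        rcases he with he | he
        · exact absurd he.symm hfirst
        · exact he
      rcases ih he' with ⟨w1, w2, hE, hL⟩ | ⟨w1, w2, hE, hL⟩
      · left
        refine ⟨Walk.cons h w1, w2, ?_, ?_⟩
        · rw [Walk.edges_cons, List.cons_append, hE, Walk.edges_cons]
        · rw [Walk.length_cons, Walk.length_cons]; omega
      · right
        refine ⟨Walk.cons h w1, w2, ?_, ?_⟩
        · rw [Walk.edges_cons, List.cons_append, hE, Walk.edges_cons]
        · rw [Walk.length_cons, Walk.length_cons]; omega

/-- Split a cycle based at `a` at an edge `s(a,b)` it contains. -/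
lemma cycle_split0 {H : SimpleGraph V} {a b : V} (d : H.Walk a a) (hd : d.IsCycle)
    (he : s(a,b) ∈ d.edges) :
    ∃ q : H.Walk b a, (s(a,b) :: q.edges).Perm d.edges ∧ q.length + 1 = d.length := by
  cases d with
  | nil => simp at he
  | @cons _ u _ h' q' =>
    rw [Walk.cons_isCycle_iff] at hd
    obtain ⟨hq'path, hq'ne⟩ := hd
    rw [Walk.edges_cons, List.mem_cons] at he
    by_cases hub : u = b
    · subst hub
      refine ⟨q', ?_, by simp⟩
      rw [Walk.edges_cons]
    · have he' : s(a,b) ∈ q'.edges := by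
        rcases he with he | he
        · rw [Sym2.eq_iff] at he
          rcases he with ⟨-, h1⟩ | ⟨h1, -⟩
          · exact absurd h1.symm hub
          · exact absurd h1 h'.ne
        · exact he
      have hrev : s(a,b) ∈ q'.reverse.edges := by
        rw [Walk.edges_reverse, List.mem_reverse]; exact he'
      obtain ⟨hadj, q'', hq''⟩ := path_first_edge q'.reverse hq'path.reverse hrev
      refine ⟨q''.append (Walk.cons h'.symm Walk.nil), ?_, ?_⟩
      · have h1 : q'.edges.reverse = s(a,b) :: q''.edges := by
          rw [← Walk.edges_reverse, hq'', Walk.edges_cons]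
        have h2 : (q''.append (Walk.cons h'.symm Walk.nil)).edges
            = q''.edges ++ [s(u,a)] := by
          rw [Walk.edges_append, Walk.edges_cons, Walk.edges_nil]
        rw [h2, Walk.edges_cons]
        have p1 : List.Perm (s(a,b) :: (q''.edges ++ [s(u,a)]))
            (s(a,b) :: (s(u,a) :: q''.edges)) :=
          List.Perm.cons _ (List.perm_append_singleton _ _)
        have p2 : List.Perm (s(a,b) :: (s(u,a) :: q''.edges))
            (s(u,a) :: (s(a,b) :: q''.edges)) := List.Perm.swap _ _ _
        have p3 : List.Perm (s(u,a) :: (s(a,b) :: q''.edges)) (s(u,a) :: q'.edges) := by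
          rw [← h1]
          exact List.Perm.cons _ (List.reverse_perm _)
        have p4 : s(u,a) :: q'.edges = s(a,u) :: q'.edges := by rw [Sym2.eq_swap]
        rw [← p4]
        exact (p1.trans p2).trans p3
      · have h3 : q'.reverse.length = q''.length + 1 := by
          rw [hq'', Walk.length_cons]
        rw [Walk.length_append, Walk.length_cons, Walk.length_nil, Walk.length_cons]
        rw [Walk.length_reverse] at h3
        omega

/-- Split any cycle at an edge it contains. -/
lemma cycle_split [DecidableEq V] {H : SimpleGraph V} {x a b : V} (c : H.Walk x x) (hc : c.IsCycle)
    (he : s(a,b) ∈ c.edges) :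
    ∃ q : H.Walk b a, (s(a,b) :: q.edges).Perm c.edges ∧ q.length + 1 = c.length := by
  have ha : a ∈ c.support := c.fst_mem_support_of_mem_edges he
  have hperm := (c.rotate_edges a ha).perm
  obtain ⟨q, hq1, hq2⟩ := cycle_split0 (c.rotate a ha) (hc.rotate ha)
    (hperm.mem_iff.mpr he)
  refine ⟨q, hq1.trans hperm, ?_⟩
  have hlen : (c.rotate a ha).length = c.length := by
    rw [← Walk.length_edges, ← Walk.length_edges]
    exact hperm.length_eq
  omega


lemma HG.anti {g : ℕ} {H G : SimpleGraph V} (hle : H ≤ G) (hG : HG g G) : HG g H := by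
  intro u w hw
  have hsub : ∀ e ∈ w.edges, e ∈ G.edgeSet := fun e he =>
    edgeSet_mono hle (w.edges_subset_edgeSet he)
  have := hG (w.transfer G hsub) (hw.transfer hsub)
  rwa [Walk.length_transfer] at this

lemma HG.bot {g : ℕ} : HG g (⊥ : SimpleGraph V) := by
  intro u w hw
  cases w with
  | nil => exact absurd hw (by simp [Walk.isCycle_def])
  | cons h p => exact absurd h (by simp)


lemma transfer_sub {H K : SimpleGraph V} {u v : V} (q : K.Walk u v)
    (hsub : ∀ e ∈ q.edges, e ∈ H.edgeSet) : H.edist u v ≤ q.length := by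
  have := SimpleGraph.edist_le (q.transfer H hsub)
  rwa [Walk.length_transfer] at this

lemma HG_addE [DecidableEq V] {H : SimpleGraph V} {g : ℕ} {a b : V} (hab : a ≠ b)
    (hH : HG g H) (hd : (g:ℕ∞) ≤ H.edist a b + 1) : HG g (addE H a b) := by
  intro u w hw
  by_cases hmem : s(a,b) ∈ w.edges
  · obtain ⟨q, hperm, hlen⟩ := cycle_split w hw hmem
    have hnodup : (s(a,b) :: q.edges).Nodup := hperm.nodup_iff.mpr hw.isTrail.edges_nodup
    have hab_not : s(a,b) ∉ q.edges := (List.nodup_cons.mp hnodup).1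
    have hsub : ∀ e ∈ q.edges, e ∈ H.edgeSet := by
      intro e he
      have h' : e ∈ (addE H a b).edgeSet := q.edges_subset_edgeSet he
      rw [edgeSet_addE hab, Set.mem_insert_iff] at h'
      rcases h' with rfl | h'
      · exact absurd he hab_not
      · exact h'
    have hq : H.edist b a ≤ q.length := transfer_sub q hsub
    rw [SimpleGraph.edist_comm] at hd
    have h2 : (g:ℕ∞) ≤ ((q.length + 1 : ℕ) : ℕ∞) := by
      push_cast
      exact le_trans hd (add_le_add_left hq 1)
    rw [Nat.cast_le] at h2
    omega
  · have hsub : ∀ e ∈ w.edges, e ∈ H.edgeSet := by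
      intro e he
      have h' : e ∈ (addE H a b).edgeSet := w.edges_subset_edgeSet he
      rw [edgeSet_addE hab, Set.mem_insert_iff] at h'
      rcases h' with rfl | h'
      · exact absurd he hmem
      · exact h'
    have := hH (w.transfer H hsub) (hw.transfer hsub)
    rwa [Walk.length_transfer] at this

lemma HG_addE2 [DecidableEq V] {H : SimpleGraph V} {g : ℕ} {a b c d : V}
    (hab : a ≠ b) (hcd : c ≠ d) (hee : s(a,b) ≠ s(c,d)) (hH : HG g H)
    (h1 : (g:ℕ∞) ≤ H.edist a b + 1) (h2 : (g:ℕ∞) ≤ H.edist c d + 1)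
    (h3 : (g:ℕ∞) ≤ H.edist a c + H.edist b d + 2)
    (h4 : (g:ℕ∞) ≤ H.edist a d + H.edist b c + 2) :
    HG g (addE (addE H a b) c d) := by
  intro u w hw
  have hES : (addE (addE H a b) c d).edgeSet
      = insert s(c,d) (insert s(a,b) H.edgeSet) := by
    rw [edgeSet_addE hcd, edgeSet_addE hab]
  by_cases hmab : s(a,b) ∈ w.edges
  · obtain ⟨q, hperm, hlen⟩ := cycle_split w hw hmab
    have hnodup : (s(a,b) :: q.edges).Nodup := hperm.nodup_iff.mpr hw.isTrail.edges_nodup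
    have hab_not : s(a,b) ∉ q.edges := (List.nodup_cons.mp hnodup).1
    have hqnodup : q.edges.Nodup := (List.nodup_cons.mp hnodup).2
    have hqsub : ∀ e ∈ q.edges, e ≠ s(c,d) → e ∈ H.edgeSet := by
      intro e he hne
      have h' : e ∈ (addE (addE H a b) c d).edgeSet := q.edges_subset_edgeSet he
      rw [hES, Set.mem_insert_iff, Set.mem_insert_iff] at h'
      rcases h' with rfl | rfl | h'
      · exact absurd rfl hne
      · exact absurd he hab_not
      · exact h'
    by_cases hmcd : s(c,d) ∈ q.edges
    · rcases walk_split_at_edge q hmcd with ⟨w1, w2, hE, hL⟩ | ⟨w1, w2, hE, hL⟩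
      all_goals {
        have hnd : (w1.edges ++ s(c,d) :: w2.edges).Nodup := by rw [hE]; exact hqnodup
        have hcd1 : s(c,d) ∉ w1.edges := by
          intro hx
          exact (List.disjoint_of_nodup_append hnd) hx (List.mem_cons_self)
        have hcd2 : s(c,d) ∉ w2.edges :=
          (List.nodup_cons.mp (List.nodup_append.mp hnd).2.1).1
        have hsub1 : ∀ e ∈ w1.edges, e ∈ H.edgeSet := by
          intro e he
          refine hqsub e ?_ (fun hx => hcd1 (hx ▸ he))
          rw [← hE]; exact List.mem_append_left _ he
        have hsub2 : ∀ e ∈ w2.edges, e ∈ H.edgeSet := by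
          intro e he
          refine hqsub e ?_ (fun hx => hcd2 (hx ▸ he))
          rw [← hE]; exact List.mem_append_right _ (List.mem_cons_of_mem _ he)
        have hd1 := transfer_sub w1 hsub1
        have hd2 := transfer_sub w2 hsub2
        have hfin : (g:ℕ∞) ≤ ((w1.length + w2.length + 2 : ℕ) : ℕ∞) := by
          push_cast
          first
          | (refine le_trans h4 ?_
             have e1 : H.edist a d ≤ (w2.length : ℕ∞) :=
               le_trans (le_of_eq SimpleGraph.edist_comm) hd2
             calc H.edist a d + H.edist b c + 2
                 ≤ (w2.length : ℕ∞) + (w1.length : ℕ∞) + 2 :=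
                   add_le_add (add_le_add e1 hd1) le_rfl
               _ = (w1.length : ℕ∞) + (w2.length : ℕ∞) + 2 := by ring)
          | (refine le_trans h3 ?_
             have e1 : H.edist a c ≤ (w2.length : ℕ∞) :=
               le_trans (le_of_eq SimpleGraph.edist_comm) hd2
             calc H.edist a c + H.edist b d + 2
                 ≤ (w2.length : ℕ∞) + (w1.length : ℕ∞) + 2 :=
                   add_le_add (add_le_add e1 hd1) le_rfl
               _ = (w1.length : ℕ∞) + (w2.length : ℕ∞) + 2 := by ring)
        rw [Nat.cast_le] at hfin
        omega
      }
    · have hsub : ∀ e ∈ q.edges, e ∈ H.edgeSet := fun e he =>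
        hqsub e he (fun hx => hmcd (hx ▸ he))
      have hq : H.edist b a ≤ q.length := transfer_sub q hsub
      rw [SimpleGraph.edist_comm] at h1
      have hfin : (g:ℕ∞) ≤ ((q.length + 1 : ℕ) : ℕ∞) := by
        push_cast
        exact le_trans h1 (add_le_add_left hq 1)
      rw [Nat.cast_le] at hfin
      omega
  · by_cases hmcd : s(c,d) ∈ w.edges
    · obtain ⟨q, hperm, hlen⟩ := cycle_split w hw hmcd
      have hnodup : (s(c,d) :: q.edges).Nodup := hperm.nodup_iff.mpr hw.isTrail.edges_nodup
      have hcd_not : s(c,d) ∉ q.edges := (List.nodup_cons.mp hnodup).1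
      have hsub : ∀ e ∈ q.edges, e ∈ H.edgeSet := by
        intro e he
        have hqw : e ∈ w.edges := hperm.subset (List.mem_cons_of_mem _ he)
        have h' : e ∈ (addE (addE H a b) c d).edgeSet := w.edges_subset_edgeSet hqw
        rw [hES, Set.mem_insert_iff, Set.mem_insert_iff] at h'
        rcases h' with rfl | rfl | h'
        · exact absurd he hcd_not
        · exact absurd hqw hmab
        · exact h'
      have hq : H.edist d c ≤ q.length := transfer_sub q hsub
      rw [SimpleGraph.edist_comm] at h2
      have hfin : (g:ℕ∞) ≤ ((q.length + 1 : ℕ) : ℕ∞) := by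
        push_cast
        exact le_trans h2 (add_le_add_left hq 1)
      rw [Nat.cast_le] at hfin
      omega
    · have hsub : ∀ e ∈ w.edges, e ∈ H.edgeSet := by
        intro e he
        have h' : e ∈ (addE (addE H a b) c d).edgeSet := w.edges_subset_edgeSet he
        rw [hES, Set.mem_insert_iff, Set.mem_insert_iff] at h'
        rcases h' with rfl | rfl | h'
        · exact absurd he hmcd
        · exact absurd he hmab
        · exact h'
      have := hH (w.transfer H hsub) (hw.transfer hsub)
      rwa [Walk.length_transfer] at this

lemma edist_succ {G : SimpleGraph V} {v u : V} {R : ℕ}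
    (h : G.edist v u ≤ ((R:ℕ∞) + 1)) (hne : u ≠ v) :
    ∃ w, G.Adj w u ∧ G.edist v w ≤ (R:ℕ∞) := by
  have hnetop : G.edist v u ≠ ⊤ := by
    intro h'
    rw [h', top_le_iff] at h
    have hne' : ((R:ℕ∞) + 1) ≠ ⊤ := by
      refine WithTop.add_ne_top.mpr ⟨WithTop.coe_ne_top, ?_⟩
      exact (by simp : (1:ℕ∞) ≠ ⊤)
    exact hne' h
  obtain ⟨p, hp⟩ := exists_walk_of_edist_ne_top hnetop
  have hlen : (p.length : ℕ∞) ≤ (R:ℕ∞) + 1 := hp ▸ h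
  cases hq : p.reverse with
  | nil => exact absurd rfl hne
  | @cons _ w _ hadj q =>
    refine ⟨w, hadj.symm, ?_⟩
    have h1 : G.edist v w ≤ (q.reverse.length : ℕ∞) := SimpleGraph.edist_le _
    rw [Walk.length_reverse] at h1
    have h2 : p.length = q.length + 1 := by
      have := congrArg (Walk.length) hq
      rwa [Walk.length_reverse, Walk.length_cons] at this
    refine h1.trans ?_
    rw [h2] at hlen
    have : ((q.length + 1 : ℕ) : ℕ∞) ≤ ((R + 1 : ℕ) : ℕ∞) := by push_cast; exact hlen
    rw [Nat.cast_le] at this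
    exact_mod_cast Nat.cast_le.mpr (by omega : q.length ≤ R)

open Classical in
lemma ball_bound [Fintype V] {G : SimpleGraph V} {r : ℕ}
    (hdeg : ∀ w : V, (G.neighborSet w).ncard ≤ r) (v : V) (R : ℕ) :
    (Finset.univ.filter (fun u => G.edist v u ≤ (R:ℕ∞))).card ≤ (r+1)^R := by
  classical
  induction R with
  | zero =>
    have hsub : (Finset.univ.filter (fun u => G.edist v u ≤ ((0:ℕ):ℕ∞))) ⊆ {v} := by
      intro u hu
      rw [Finset.mem_filter] at hu
      have : G.edist v u = 0 := le_antisymm (by exact_mod_cast hu.2) zero_le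
      rw [Finset.mem_singleton]
      exact (SimpleGraph.edist_eq_zero_iff.mp this).symm
    calc _ ≤ ({v} : Finset V).card := Finset.card_le_card hsub
      _ = 1 := Finset.card_singleton _
      _ ≤ (r+1)^0 := by simp
  | succ R ih =>
    have hsub : (Finset.univ.filter (fun u => G.edist v u ≤ ((R+1:ℕ):ℕ∞)))
        ⊆ (Finset.univ.filter (fun u => G.edist v u ≤ (R:ℕ∞))).biUnion
          (fun w => insert w (G.neighborSet w).toFinset) := by
      intro u hu
      rw [Finset.mem_filter] at hu
      rw [Finset.mem_biUnion]
      by_cases huv : u = v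
      · subst huv
        refine ⟨u, ?_, by simp⟩
        rw [Finset.mem_filter]
        simp
      · obtain ⟨w, hadj, hw⟩ := edist_succ (by
          refine le_trans hu.2 ?_
          push_cast
          exact le_refl _) huv
        refine ⟨w, ?_, ?_⟩
        · rw [Finset.mem_filter]; exact ⟨Finset.mem_univ _, hw⟩
        · rw [Finset.mem_insert, Set.mem_toFinset]
          exact Or.inr hadj
    calc _ ≤ ((Finset.univ.filter (fun u => G.edist v u ≤ (R:ℕ∞))).biUnion
          (fun w => insert w (G.neighborSet w).toFinset)).card := Finset.card_le_card hsub
      _ ≤ ∑ w ∈ (Finset.univ.filter (fun u => G.edist v u ≤ (R:ℕ∞))),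
            (insert w (G.neighborSet w).toFinset).card := Finset.card_biUnion_le
      _ ≤ ∑ _w ∈ (Finset.univ.filter (fun u => G.edist v u ≤ (R:ℕ∞))), (r+1) := by
          refine Finset.sum_le_sum ?_
          intro w _
          refine le_trans (Finset.card_insert_le _ _) ?_
          have : (G.neighborSet w).toFinset.card = (G.neighborSet w).ncard :=
            (Set.ncard_eq_toFinset_card' _).symm
          rw [this]
          exact Nat.add_le_add_right (hdeg w) 1
      _ = (Finset.univ.filter (fun u => G.edist v u ≤ (R:ℕ∞))).card * (r+1) := by
          rw [Finset.sum_const, smul_eq_mul]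
      _ ≤ (r+1)^R * (r+1) := Nat.mul_le_mul_right _ ih
      _ = (r+1)^(R+1) := (pow_succ _ _).symm

open Classical in
lemma exists_far [Fintype V] {G : SimpleGraph V} {r : ℕ}
    (hdeg : ∀ w : V, (G.neighborSet w).ncard ≤ r) (v : V) (R : ℕ)
    (hn : (r+1)^R < Fintype.card V) : ∃ u, (R:ℕ∞) < G.edist v u := by
  classical
  by_contra hcon
  push_neg at hcon
  have : (Finset.univ : Finset V) ⊆ Finset.univ.filter (fun u => G.edist v u ≤ (R:ℕ∞)) := by
    intro u _
    rw [Finset.mem_filter]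
    exact ⟨Finset.mem_univ _, hcon u⟩
  have hcard := Finset.card_le_card this
  rw [Finset.card_univ] at hcard
  exact absurd (hcard.trans (ball_bound hdeg v R)) (by omega)

lemma edist_delete_ge [DecidableEq V] {G : SimpleGraph V} {g : ℕ} {x y : V} (hxy : G.Adj x y)
    (hH : HG g G) : (g:ℕ∞) ≤ (G.deleteEdges {s(x,y)}).edist x y + 1 := by
  set H := G.deleteEdges {s(x,y)} with hHdef
  by_cases htop : H.edist x y = ⊤
  · rw [htop]; exact le_top
  · obtain ⟨p, hp⟩ := exists_walk_of_edist_ne_top htop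
    have hsubH : ∀ e ∈ p.bypass.edges, e ∈ H.edgeSet := fun e he =>
      p.bypass.edges_subset_edgeSet he
    have hsub : ∀ e ∈ p.bypass.edges, e ∈ G.edgeSet := by
      intro e he
      have := hsubH e he
      rw [hHdef, edgeSet_deleteEdges] at this
      exact this.1
    have hnot : s(x,y) ∉ p.bypass.edges := by
      intro hmem
      have := hsubH _ hmem
      rw [hHdef, edgeSet_deleteEdges] at this
      exact this.2 rfl
    set pG := p.bypass.transfer G hsub with hpG
    have hpath : pG.IsPath := (p.bypass_isPath).transfer _
    have hcyc : (Walk.cons hxy.symm pG).IsCycle := by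
      rw [Walk.cons_isCycle_iff]
      refine ⟨hpath, ?_⟩
      rw [hpG, Walk.edges_transfer]
      rw [Sym2.eq_swap]
      exact hnot
    have hlen := hH _ hcyc
    rw [Walk.length_cons, hpG, Walk.length_transfer] at hlen
    have h1 : (g:ℕ∞) ≤ ((p.bypass.length + 1 : ℕ) : ℕ∞) := by exact_mod_cast hlen
    refine h1.trans ?_
    push_cast
    have h2 : (p.bypass.length : ℕ∞) ≤ H.edist x y := by
      rw [← hp]
      exact_mod_cast Nat.cast_le.mpr (Walk.length_bypass_le _)
    exact add_le_add_left h2 1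

lemma HG.le_egirth {g : ℕ} {G : SimpleGraph V} (h : HG g G) : (g:ℕ∞) ≤ G.egirth := by
  rw [SimpleGraph.le_egirth]
  intro a w hw
  exact_mod_cast h w hw

end ES

/-- **Erdős–Sachs corollary.** For every `r ≥ 1` and `g ≥ 3`, for all
sufficiently large `n` with `n·r` even, there is an `n`-vertex `r`-regular graph of
girth at least `g`. -/
theorem exists_regular_high_girth (r g : ℕ) (hr : 1 ≤ r) (hg : 3 ≤ g) :
    ∃ n₀ : ℕ, ∀ n : ℕ, n₀ ≤ n → Even (n * r) →
      ∃ G : SimpleGraph (Fin n),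
        (∀ v : Fin n, Nat.card (G.neighborSet v) = r) ∧ (g : ℕ∞) ≤ G.egirth := by
  classical
  refine ⟨(r+1)^(2*g+5) + 1, ?_⟩
  intro n hn hEven
  have coe_le_of_lt : ∀ (a : ℕ) (e : ℕ∞), ((a:ℕ∞) < e) → ((a+1 : ℕ) : ℕ∞) ≤ e := by
    intro a e he
    rcases eq_or_ne e ⊤ with rfl | hne
    · exact le_top
    · lift e to ℕ using hne
      rw [Nat.cast_lt] at he
      exact_mod_cast by omega
  have le_coe_of_lt : ∀ (a : ℕ) (e : ℕ∞), 1 ≤ a → e < ((a:ℕ∞)) → e ≤ ((a-1 : ℕ) : ℕ∞) := by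
    intro a e ha he
    have hne : e ≠ ⊤ := by
      intro h
      rw [h] at he
      exact not_top_lt he
    lift e to ℕ using hne
    rw [Nat.cast_lt] at he
    exact_mod_cast by omega
  let P : SimpleGraph (Fin n) → Prop :=
    fun G => (∀ w : Fin n, (G.neighborSet w).ncard ≤ r) ∧ ES.HG g G
  let S : Set ℕ := {k | ∃ G, P G ∧ G.edgeSet.ncard = k}
  have hSne : S.Nonempty := ⟨0, ⊥, ⟨fun w => by
    have hb : (⊥ : SimpleGraph (Fin n)).neighborSet w = ∅ := by
      ext u
      simp
    rw [hb, Set.ncard_empty]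
    exact Nat.zero_le r, ES.HG.bot⟩, by simp⟩
  have hSbdd : BddAbove S := ⟨Nat.card (Sym2 (Fin n)), by
    rintro k ⟨G, -, rfl⟩
    exact le_trans (Set.ncard_le_ncard (Set.subset_univ _) Set.finite_univ)
      (le_of_eq (Set.ncard_univ _))⟩
  obtain ⟨G, hPG, hGcard⟩ := Nat.sSup_mem hSne hSbdd
  have hmax : ∀ G' : SimpleGraph (Fin n), P G' → G'.edgeSet.ncard ≤ sSup S :=
    fun G' h => le_csSup hSbdd ⟨G', h, rfl⟩
  have hcardV : Fintype.card (Fin n) = n := Fintype.card_fin n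
  have hreg : ∀ w : Fin n, (G.neighborSet w).ncard = r := by
    by_contra hcon
    push_neg at hcon
    obtain ⟨v, hv⟩ := hcon
    have hvlt : (G.neighborSet v).ncard < r := lt_of_le_of_ne (hPG.1 v) hv
    by_cases hA : ∃ v' : Fin n, (G.neighborSet v').ncard < r ∧ v' ≠ v ∧
        ((g-1 : ℕ) : ℕ∞) ≤ G.edist v v'
    · -- Case A : add an edge between two far-apart deficient vertices
      obtain ⟨v', hv'def, hv'ne, hv'far⟩ := hA
      have hvv' : v ≠ v' := hv'ne.symm
      have hnadj : ¬ G.Adj v v' := by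
        intro hadj
        rw [SimpleGraph.edist_eq_one_iff_adj.mpr hadj] at hv'far
        have : (g-1 : ℕ) ≤ 1 := by exact_mod_cast hv'far
        omega
      set G' := ES.addE G v v' with hG'
      have hP' : P G' := by
        constructor
        · intro w
          rw [hG', ES.neighborSet_addE hvv' w]
          by_cases hw1 : w = v
          · rw [if_pos hw1]
            refine le_trans (Set.ncard_insert_le _ _) ?_
            subst hw1
            omega
          · rw [if_neg hw1]
            by_cases hw2 : w = v'
            · rw [if_pos hw2]
              refine le_trans (Set.ncard_insert_le _ _) ?_
              subst hw2
              omega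
            · rw [if_neg hw2]
              exact hPG.1 w
        · refine ES.HG_addE hvv' hPG.2 ?_
          refine le_trans (le_of_eq ?_) (add_le_add_left hv'far 1)
          have h8 : ((g-1:ℕ):ℕ∞) + 1 = (((g-1)+1 : ℕ) : ℕ∞) := by push_cast; ring
          have h9 : (g-1)+1 = g := by omega
          rw [h8, h9]
      have hcard' : G'.edgeSet.ncard = G.edgeSet.ncard + 1 := by
        rw [hG', ES.edgeSet_addE hvv', Set.ncard_insert_of_notMem
          (by rw [SimpleGraph.mem_edgeSet]; exact hnadj) (Set.toFinite _)]
      have hle := hmax G' hP'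
      omega
    · push_neg at hA
      obtain ⟨x, hx⟩ : ∃ x, ((2*g+5 : ℕ):ℕ∞) < G.edist v x := by
        refine ES.exists_far hPG.1 v (2*g+5) ?_
        rw [hcardV]
        omega
      have hx1 : ((2*g+6 : ℕ):ℕ∞) ≤ G.edist v x := by
        have h := coe_le_of_lt _ _ hx
        have h2 : (2*g+5)+1 = 2*g+6 := by omega
        rwa [h2] at h
      have hvx : v ≠ x := by
        intro h
        rw [← h, SimpleGraph.edist_self] at hx
        exact (not_lt_of_ge zero_le) hx
      have hxr : (G.neighborSet x).ncard = r := by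
        by_contra hxd
        have hxlt : (G.neighborSet x).ncard < r := lt_of_le_of_ne (hPG.1 x) hxd
        have h1 := hA x hxlt (Ne.symm hvx)
        have h2 : G.edist v x ≤ ((g-2:ℕ):ℕ∞) := le_coe_of_lt (g-1) _ (by omega) h1
        have h3 : ((2*g+6:ℕ):ℕ∞) ≤ ((g-2:ℕ):ℕ∞) := le_trans hx1 h2
        rw [Nat.cast_le] at h3
        omega
      obtain ⟨y, hy⟩ : (G.neighborSet x).Nonempty := by
        rw [← Set.ncard_pos (Set.toFinite _), hxr]
        omega
      have hadjxy : G.Adj x y := hy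
      have hxy : x ≠ y := hadjxy.ne
      have hyv : ((2*g+5 : ℕ):ℕ∞) ≤ G.edist v y := by
        have htri : G.edist v x ≤ G.edist v y + G.edist y x :=
          SimpleGraph.edist_triangle
        have hyx1 : G.edist y x = 1 := SimpleGraph.edist_eq_one_iff_adj.mpr hadjxy.symm
        rw [hyx1] at htri
        rcases eq_or_ne (G.edist v y) ⊤ with h | h
        · rw [h]; exact le_top
        · lift G.edist v y to ℕ using h with m hm
          have h4 : ((2*g+6:ℕ):ℕ∞) ≤ ((m+1:ℕ):ℕ∞) := by
            push_cast
            exact le_trans hx1 htri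
          rw [Nat.cast_le] at h4
          exact_mod_cast Nat.cast_le.mpr (by omega : 2*g+5 ≤ m)
      have hvy : v ≠ y := by
        intro h
        rw [← h, SimpleGraph.edist_self] at hyv
        have : (2*g+5 : ℕ) ≤ 0 := by exact_mod_cast hyv
        omega
      have key : ∀ v' : Fin n, G.edist v v' ≤ ((g-2:ℕ):ℕ∞) →
          (v' = v → (G.neighborSet v).ncard + 2 ≤ r) →
          (v' ≠ v → (G.neighborSet v').ncard + 1 ≤ r) → False := by
        intro v' hnear hc1 hc2
        have hnt : G.edist v v' ≠ ⊤ := by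
          intro h'
          rw [h'] at hnear
          exact (by simp : ¬ (⊤:ℕ∞) ≤ ((g-2:ℕ):ℕ∞)) hnear
        have hv'y : ((g+7:ℕ):ℕ∞) ≤ G.edist v' y := by
          have htri : G.edist v y ≤ G.edist v v' + G.edist v' y :=
            SimpleGraph.edist_triangle
          rcases eq_or_ne (G.edist v' y) ⊤ with h | h
          · rw [h]; exact le_top
          · lift G.edist v' y to ℕ using h with m hm
            lift G.edist v v' to ℕ using hnt with k hk
            rw [Nat.cast_le] at hnear
            have h6 : ((2*g+5:ℕ):ℕ∞) ≤ ((k+m:ℕ):ℕ∞) := by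
              push_cast
              exact le_trans hyv htri
            rw [Nat.cast_le] at h6
            exact_mod_cast Nat.cast_le.mpr (by omega : g+7 ≤ m)
        have hv'x : ((g+8:ℕ):ℕ∞) ≤ G.edist v' x := by
          have htri : G.edist v x ≤ G.edist v v' + G.edist v' x :=
            SimpleGraph.edist_triangle
          rcases eq_or_ne (G.edist v' x) ⊤ with h | h
          · rw [h]; exact le_top
          · lift G.edist v' x to ℕ using h with m hm
            lift G.edist v v' to ℕ using hnt with k hk
            rw [Nat.cast_le] at hnear
            have h6 : ((2*g+6:ℕ):ℕ∞) ≤ ((k+m:ℕ):ℕ∞) := by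
              push_cast
              exact le_trans hx1 htri
            rw [Nat.cast_le] at h6
            exact_mod_cast Nat.cast_le.mpr (by omega : g+8 ≤ m)
        have hv'ney : v' ≠ y := by
          intro h
          rw [h, SimpleGraph.edist_self] at hv'y
          have : (g+7:ℕ) ≤ 0 := by exact_mod_cast hv'y
          omega
        have hv'nex : v' ≠ x := by
          intro h
          rw [h, SimpleGraph.edist_self] at hv'x
          have : (g+8:ℕ) ≤ 0 := by exact_mod_cast hv'x
          omega
        have hnadjvx : ¬ G.Adj v x := by
          intro hadj
          rw [SimpleGraph.edist_eq_one_iff_adj.mpr hadj] at hx1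
          have : (2*g+6 : ℕ) ≤ 1 := by exact_mod_cast hx1
          omega
        have hnadjv'y : ¬ G.Adj v' y := by
          intro hadj
          rw [SimpleGraph.edist_eq_one_iff_adj.mpr hadj] at hv'y
          have : (g+7 : ℕ) ≤ 1 := by exact_mod_cast hv'y
          omega
        have hsym : s(v,x) ≠ s(v',y) := by
          intro h
          rw [Sym2.eq_iff] at h
          rcases h with ⟨-, h2⟩ | ⟨h1, -⟩
          · exact hxy (h2 ▸ rfl)
          · exact hvy h1
        set H := G.deleteEdges {s(x,y)} with hHdef
        have hHle : H ≤ G := SimpleGraph.deleteEdges_le _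
        have hedH : ∀ a b : Fin n, G.edist a b ≤ H.edist a b :=
          fun a b => SimpleGraph.edist_anti hHle
        set G2 := ES.addE (ES.addE H v x) v' y with hG2
        have hHG2 : ES.HG g G2 := by
          refine ES.HG_addE2 hvx hv'ney hsym (ES.HG.anti hHle hPG.2) ?_ ?_ ?_ ?_
          · refine le_trans ?_ (add_le_add_left (le_trans hx1 (hedH v x)) 1)
            rw [← Nat.cast_one, ← Nat.cast_add, Nat.cast_le]
            omega
          · refine le_trans ?_ (add_le_add_left (le_trans hv'y (hedH v' y)) 1)
            rw [← Nat.cast_one, ← Nat.cast_add, Nat.cast_le]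
            omega
          · have hgirth : (g:ℕ∞) ≤ H.edist x y + 1 := ES.edist_delete_ge hadjxy hPG.2
            calc (g:ℕ∞) ≤ H.edist x y + 1 := hgirth
              _ ≤ H.edist x y + 2 := add_le_add_right one_le_two _
              _ ≤ H.edist v v' + H.edist x y + 2 := add_le_add_left le_add_self 2
          · have h10 : ((2*g+5:ℕ):ℕ∞) ≤ H.edist v y + H.edist x v' :=
              le_trans (le_trans hyv (hedH v y)) le_self_add
            have h11 : ((2*g+5:ℕ):ℕ∞) + 2 = ((2*g+7:ℕ):ℕ∞) := by push_cast; ring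
            calc (g:ℕ∞) ≤ ((2*g+7:ℕ):ℕ∞) := Nat.cast_le.mpr (by omega)
              _ = ((2*g+5:ℕ):ℕ∞) + 2 := h11.symm
              _ ≤ H.edist v y + H.edist x v' + 2 := add_le_add_left h10 2
        have hP2 : P G2 := by
          refine ⟨?_, hHG2⟩
          intro w
          rw [hG2, ES.neighborSet_addE hv'ney w, ES.neighborSet_addE hvx w,
            ES.neighborSet_delE w]
          by_cases hwv' : w = v'
          · subst hwv'
            rw [if_pos rfl]
            by_cases hwv : w = v
            · subst hwv
              rw [if_pos rfl, if_neg hvx, if_neg hvy]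
              refine le_trans (Set.ncard_insert_le _ _) ?_
              have h1 := Set.ncard_insert_le x (G.neighborSet w)
              have h2 := hc1 rfl
              omega
            · rw [if_neg hwv, if_neg hv'nex, if_neg hv'ney, if_neg hv'nex]
              refine le_trans (Set.ncard_insert_le _ _) ?_
              exact hc2 (fun h => hwv h)
          · rw [if_neg hwv']
            by_cases hwy : w = y
            · subst hwy
              rw [if_pos rfl, if_neg (Ne.symm hvy), if_neg (Ne.symm hxy),
                if_neg (Ne.symm hxy), if_pos rfl]
              refine le_trans (Set.ncard_insert_le _ _) ?_
              have h1 : x ∈ G.neighborSet w := hadjxy.symm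
              have h2 : (G.neighborSet w \ {x}).ncard = (G.neighborSet w).ncard - 1 :=
                Set.ncard_diff_singleton_of_mem h1
              have h3 := hPG.1 w
              have h4 : 0 < (G.neighborSet w).ncard := by
                rw [Set.ncard_pos (Set.toFinite _)]
                exact ⟨x, h1⟩
              omega
            · rw [if_neg hwy]
              by_cases hwv : w = v
              · subst hwv
                rw [if_pos rfl, if_neg hvx, if_neg hvy]
                refine le_trans (Set.ncard_insert_le _ _) ?_
                omega
              · rw [if_neg hwv]
                by_cases hwx : w = x
                · subst hwx
                  rw [if_pos rfl, if_pos rfl]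
                  refine le_trans (Set.ncard_insert_le _ _) ?_
                  have h1 : y ∈ G.neighborSet w := hy
                  have h2 : (G.neighborSet w \ {y}).ncard = (G.neighborSet w).ncard - 1 :=
                    Set.ncard_diff_singleton_of_mem h1
                  have h4 : 0 < (G.neighborSet w).ncard := by
                    rw [Set.ncard_pos (Set.toFinite _)]
                    exact ⟨y, h1⟩
                  omega
                · rw [if_neg hwx, if_neg hwx, if_neg hwy]
                  exact hPG.1 w
        have hedge2 : G2.edgeSet.ncard = G.edgeSet.ncard + 1 := by
          have hxyE : s(x,y) ∈ G.edgeSet := hadjxy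
          have h0 : H.edgeSet = G.edgeSet \ {s(x,y)} := SimpleGraph.edgeSet_deleteEdges _
          have hvxE : s(v,x) ∉ G.edgeSet \ {s(x,y)} := fun h => hnadjvx h.1
          have hv'yE : s(v',y) ∉ insert s(v,x) (G.edgeSet \ {s(x,y)}) := by
            intro h
            rcases Set.mem_insert_iff.mp h with h | h
            · exact hsym h.symm
            · exact hnadjv'y h.1
          rw [hG2, ES.edgeSet_addE hv'ney, ES.edgeSet_addE hvx, h0,
            Set.ncard_insert_of_notMem hv'yE (Set.toFinite _),
            Set.ncard_insert_of_notMem hvxE (Set.toFinite _),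
            Set.ncard_diff_singleton_of_mem hxyE]
          have hpos : 0 < G.edgeSet.ncard := by
            rw [Set.ncard_pos (Set.toFinite _)]
            exact ⟨_, hxyE⟩
          omega
        have hle := hmax G2 hP2
        omega
      by_cases hvbig : (G.neighborSet v).ncard + 2 ≤ r
      · exact key v (by simp) (fun _ => hvbig) (fun h => absurd rfl h)
      · obtain ⟨w, hwv, hwdef⟩ : ∃ w, w ≠ v ∧ (G.neighborSet w).ncard < r := by
          by_contra hno
          push_neg at hno
          have hall : ∀ w : Fin n, w ≠ v → (G.neighborSet w).ncard = r :=
            fun w hw => le_antisymm (hPG.1 w) (hno w hw)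
          have hdeg_eq : ∀ w : Fin n, (G.neighborSet w).ncard = G.degree w := by
            intro w
            rw [← SimpleGraph.card_neighborSet_eq_degree]
            exact Nat.card_eq_fintype_card
          have hsum2 : ∑ w : Fin n, (G.neighborSet w).ncard = 2 * G.edgeFinset.card := by
            rw [Finset.sum_congr rfl (fun w _ => hdeg_eq w)]
            exact SimpleGraph.sum_degrees_eq_twice_card_edges G
          have hsplit : ∑ w : Fin n, (G.neighborSet w).ncard
              = ∑ w ∈ Finset.univ.erase v, (G.neighborSet w).ncard
                + (G.neighborSet v).ncard :=
            (Finset.sum_erase_add _ _ (Finset.mem_univ v)).symm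
          have hconst : ∑ w ∈ Finset.univ.erase v, (G.neighborSet w).ncard = (n-1) * r := by
            rw [Finset.sum_congr rfl (fun w hw => hall w (Finset.ne_of_mem_erase hw)),
              Finset.sum_const, Finset.card_erase_of_mem (Finset.mem_univ v),
              Finset.card_univ, hcardV, smul_eq_mul]
          have hn1 : 1 ≤ n := by
            have hp : 1 ≤ (r+1)^(2*g+5) := Nat.one_le_pow _ _ (by omega)
            omega
          have hnr : (n-1)*r + r = n*r := by
            have h7 : n - 1 + 1 = n := by omega
            calc (n-1)*r + r = ((n-1)+1)*r := by rw [add_mul, one_mul]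
              _ = n*r := by rw [h7]
          obtain ⟨m, hm⟩ := hEven
          rw [hsplit, hconst] at hsum2
          omega
        have hnearw := hA w hwdef hwv
        refine key w (le_coe_of_lt (g-1) _ (by omega) hnearw) (fun h => absurd h hwv)
          (fun _ => by omega)
  refine ⟨G, fun w => ?_, ES.HG.le_egirth hPG.2⟩
  rw [← hreg w]
  rfl
end

section
/- For every ε > 0 there exist δ > 0 and n_0 such that the following holds for every odd n ≥ n_0: if G is a d-regular triangle-free graph on n vertices with d ≥ (2/5 - δ)·n, then V(G) contains pairwise disjoint sets V_1, V_2, V_3, V_4, V_5, each of size at least (1/5 - ε)·n, such that (with indices taken modulo 5) G has no edge inside any V_i, no edge between V_i and V_{i+2}, and no edge between V_i and V_{i+3}, and every vertex of V_i has at least (1/5 - ε)·n neighbors in V_{i+1} and at least (1/5 - ε)·n neighbors in V_{i+4}; in particular, G is obtained by deleting some edges of an n-vertex blow-up of the 5-cycle C_5. -/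
open SimpleGraph Finset

set_option linter.dupNamespace false

namespace RegStab

variable {V : Type*}

/-- There is a walk from `u` to `v` of length `ℓ`. -/
def HW (G : SimpleGraph V) (u v : V) (ℓ : ℕ) : Prop :=
  ∃ c : ℕ → V, c 0 = u ∧ c ℓ = v ∧ ∀ i < ℓ, G.Adj (c i) (c (i + 1))

/-- There is a closed walk of length `ℓ`. -/
def CW (G : SimpleGraph V) (ℓ : ℕ) : Prop :=
  ∃ c : ℕ → V, c ℓ = c 0 ∧ ∀ i < ℓ, G.Adj (c i) (c (i + 1))

lemma mod_succ_lt (x ℓ : ℕ) (h : x % ℓ + 1 < ℓ) : (x + 1) % ℓ = x % ℓ + 1 := by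
  conv_lhs => rw [← Nat.div_add_mod x ℓ]
  rw [Nat.add_assoc, Nat.mul_add_mod]
  exact Nat.mod_eq_of_lt h

lemma mod_succ_eq (x ℓ : ℕ) (h : x % ℓ + 1 = ℓ) : (x + 1) % ℓ = 0 := by
  conv_lhs => rw [← Nat.div_add_mod x ℓ]
  rw [Nat.add_assoc, Nat.mul_add_mod, h, Nat.mod_self]

lemma hw_refl (G : SimpleGraph V) (u : V) : HW G u u 0 :=
  ⟨fun _ => u, rfl, rfl, by omega⟩

lemma hw_single {G : SimpleGraph V} {u v : V} (h : G.Adj u v) : HW G u v 1 := by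
  refine ⟨fun i => if i = 0 then u else v, by simp, by simp, ?_⟩
  intro i hi
  interval_cases i
  simpa using h

lemma hw_concat {G : SimpleGraph V} {u v w : V} {a b : ℕ}
    (h1 : HW G u v a) (h2 : HW G v w b) : HW G u w (a + b) := by
  obtain ⟨c1, hc10, hc1a, hadj1⟩ := h1
  obtain ⟨c2, hc20, hc2b, hadj2⟩ := h2
  refine ⟨fun i => if i < a then c1 i else c2 (i - a), ?_, ?_, ?_⟩
  · by_cases h : 0 < a
    · simpa [h] using hc10
    · have ha : a = 0 := by omega
      subst ha
      have : v = u := by rw [← hc1a, hc10]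
      simpa using this ▸ hc20
  · have : ¬ (a + b < a) := by omega
    simp only [this, if_false]
    simpa using hc2b
  · intro i hi
    by_cases h1' : i + 1 < a
    · have h0 : i < a := by omega
      simp only [h0, h1', if_true]
      exact hadj1 i (by omega)
    · by_cases h0 : i < a
      · have hia : i + 1 = a := by omega
        simp only [h0, h1', if_true, if_false]
        have : c2 (i + 1 - a) = c1 (i + 1) := by
          rw [hia]
          simp [hc20, ← hc1a]
        rw [this]
        exact hadj1 i (by omega)
      · simp only [h0, h1', if_false]
        have h3 : i - a < b := by omega
        have h4 : i + 1 - a = (i - a) + 1 := by omega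
        rw [h4]
        exact hadj2 (i - a) h3

lemma hw_reverse {G : SimpleGraph V} {u v : V} {ℓ : ℕ} (h : HW G u v ℓ) : HW G v u ℓ := by
  obtain ⟨c, hc0, hcl, hadj⟩ := h
  refine ⟨fun i => c (ℓ - i), by simpa using hcl, by simpa using hc0, ?_⟩
  intro i hi
  show G.Adj (c (ℓ - i)) (c (ℓ - (i + 1)))
  have h1 : ℓ - i = (ℓ - (i + 1)) + 1 := by omega
  rw [h1]
  exact (hadj (ℓ - (i + 1)) (by omega)).symm

lemma hw_cw {G : SimpleGraph V} {u : V} {ℓ : ℕ} (h : HW G u u ℓ) : CW G ℓ := by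
  obtain ⟨c, hc0, hcl, hadj⟩ := h
  exact ⟨c, by rw [hc0, hcl], hadj⟩

lemma cw_rotate {G : SimpleGraph V} {ℓ : ℕ} {c : ℕ → V} (hpos : 0 < ℓ)
    (hc : c ℓ = c 0) (hadj : ∀ i < ℓ, G.Adj (c i) (c (i + 1))) (s : ℕ) :
    c ((ℓ + s) % ℓ) = c ((0 + s) % ℓ) ∧
      ∀ i < ℓ, G.Adj (c ((i + s) % ℓ)) (c ((i + 1 + s) % ℓ)) := by
  constructor
  · rw [Nat.add_mod_left, Nat.zero_add]
  · intro i hi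
    have hrl : (i + s) % ℓ < ℓ := Nat.mod_lt _ hpos
    have hre : i + 1 + s = (i + s) + 1 := by omega
    by_cases h : (i + s) % ℓ + 1 < ℓ
    · rw [hre, mod_succ_lt _ _ h]
      exact hadj _ hrl
    · have h2 : (i + s) % ℓ + 1 = ℓ := by omega
      rw [hre, mod_succ_eq _ _ h2]
      have h3 := hadj _ hrl
      rwa [h2, hc] at h3

lemma zmod5_three (i j k : ZMod 5) (hij : i ≠ j) (hjk : j ≠ k) (hik : i ≠ k) :
    j = i+1 ∨ i = j+1 ∨ k = j+1 ∨ j = k+1 ∨ k = i+1 ∨ i = k+1 := by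
  revert i j k; decide
lemma zmod5_pairs (i j : ZMod 5) (h : i ≠ j) :
    ∃ a b : ZMod 5, b = a + 1 ∧ (a = i+1 ∨ a = i+4 ∨ a = j+1 ∨ a = j+4) ∧
      (b = i+1 ∨ b = i+4 ∨ b = j+1 ∨ b = j+4) := by
  revert i j; decide
lemma zmod5_two (i1 i2 : ZMod 5) :
    i1 = i2 ∨ i2 = i1+1 ∨ i1 = i2+1 ∨
      ∃ j, (i1 = j+1 ∧ i2 = j+4) ∨ (i1 = j+4 ∧ i2 = j+1) := by
  revert i1 i2; decide
lemma zmod5_impossible (i1 i2 k : ZMod 5) :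
    i1 = i2 ∨ k = i1 ∨ k = i2 ∨ i2 = i1+1 ∨ i1 = i2+1 ∨ k = i1+1 ∨ i1 = k+1 ∨
      k = i2+1 ∨ i2 = k+1 := by
  revert i1 i2 k; decide
lemma zmod5_cases (i j : ZMod 5) : j = i ∨ j = i+1 ∨ j = i+2 ∨ j = i+3 ∨ j = i+4 := by
  revert i j; decide
lemma z11 (k : ZMod 5) : k+1+1 = k+2 := by revert k; decide
lemma z14 (k : ZMod 5) : k+1+4 = k := by revert k; decide
lemma z21 (k : ZMod 5) : k+2+1 = k+3 := by revert k; decide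
lemma z24 (k : ZMod 5) : k+2+4 = k+1 := by revert k; decide
lemma z31 (k : ZMod 5) : k+3+1 = k+4 := by revert k; decide
lemma z34 (k : ZMod 5) : k+3+4 = k+2 := by revert k; decide
lemma z41 (k : ZMod 5) : k+4+1 = k := by revert k; decide
lemma z44 (k : ZMod 5) : k+4+4 = k+3 := by revert k; decide
lemma znepair (k : ZMod 5) : k ≠ k+1 ∧ k ≠ k+2 ∧ k ≠ k+3 ∧ k ≠ k+4 ∧ k+1 ≠ k+2 ∧
    k+1 ≠ k+3 ∧ k+1 ≠ k+4 ∧ k+2 ≠ k+3 ∧ k+2 ≠ k+4 ∧ k+3 ≠ k+4 := by revert k; decide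
lemma zflip (a b : ZMod 5) : a = b + 4 ↔ b = a + 1 := by revert a b; decide


section Graph
variable {n d : ℕ} {G : SimpleGraph (Fin n)} [DecidableRel G.Adj]

lemma reach (htri : ∀ a b c, G.Adj a b → G.Adj b c → G.Adj a c → False)
    (hdeg : ∀ v, (G.neighborFinset v).card = d)
    (h3 : n < 3 * d) :
    ∀ u v : Fin n, ∃ ℓ, HW G u v ℓ := by
  intro u v
  by_cases huv : u = v
  · exact ⟨0, huv ▸ hw_refl G u⟩
  by_cases hadj : G.Adj u v
  · exact ⟨1, hw_single hadj⟩
  by_cases hcom : ∃ w, G.Adj u w ∧ G.Adj w v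
  · obtain ⟨w, h1, h2⟩ := hcom
    exact ⟨2, hw_concat (hw_single h1) (hw_single h2)⟩
  have hn : 0 < n := u.pos
  have hd1 : 0 < d := by omega
  have hNu : (G.neighborFinset u).Nonempty := by
    rw [← Finset.card_pos, hdeg]; omega
  obtain ⟨w, hw⟩ := hNu
  rw [mem_neighborFinset] at hw
  by_cases hcom2 : ∃ z, G.Adj w z ∧ G.Adj z v
  · obtain ⟨z, h1, h2⟩ := hcom2
    exact ⟨3, hw_concat (hw_single hw) (hw_concat (hw_single h1) (hw_single h2))⟩
  exfalso
  have d1 : Disjoint (G.neighborFinset u) (G.neighborFinset v) := by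
    rw [Finset.disjoint_left]
    intro z hz1 hz2
    rw [mem_neighborFinset] at hz1 hz2
    exact hcom ⟨z, hz1, hz2.symm⟩
  have d2 : Disjoint (G.neighborFinset u) (G.neighborFinset w) := by
    rw [Finset.disjoint_left]
    intro z hz1 hz2
    rw [mem_neighborFinset] at hz1 hz2
    exact htri u z w hz1 hz2.symm hw
  have d3 : Disjoint (G.neighborFinset w) (G.neighborFinset v) := by
    rw [Finset.disjoint_left]
    intro z hz1 hz2
    rw [mem_neighborFinset] at hz1 hz2
    exact hcom2 ⟨z, hz1, hz2.symm⟩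
  have hcard : ((G.neighborFinset u ∪ G.neighborFinset w) ∪ G.neighborFinset v).card = 3 * d := by
    rw [Finset.card_union_of_disjoint (Finset.disjoint_union_left.mpr ⟨d1, d3⟩),
      Finset.card_union_of_disjoint d2, hdeg, hdeg, hdeg]
    ring
  have hle := Finset.card_le_univ ((G.neighborFinset u ∪ G.neighborFinset w) ∪ G.neighborFinset v)
  rw [hcard] at hle
  simp only [Fintype.card_fin] at hle
  omega


lemma exists_oddCW (hodd : Odd n)
    (hdeg : ∀ v, (G.neighborFinset v).card = d) (hd1 : 0 < d)
    (hreach : ∀ u v : Fin n, ∃ ℓ, HW G u v ℓ) :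
    ∃ ℓ, Odd ℓ ∧ CW G ℓ := by
  by_contra hcon
  push_neg at hcon
  have hn : 0 < n := by rcases hodd with ⟨k, hk⟩; omega
  classical
  set r : Fin n := ⟨0, hn⟩ with hr
  set A : Finset (Fin n) := univ.filter (fun v => ∃ ℓ, Even ℓ ∧ HW G r v ℓ) with hA
  set B : Finset (Fin n) := univ.filter (fun v => ∃ ℓ, Odd ℓ ∧ HW G r v ℓ) with hB
  have hdisj : Disjoint A B := by
    rw [Finset.disjoint_left]
    intro v hv1 hv2
    rw [hA, Finset.mem_filter] at hv1
    rw [hB, Finset.mem_filter] at hv2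
    obtain ⟨-, a, ha, hwa⟩ := hv1
    obtain ⟨-, b, hb, hwb⟩ := hv2
    refine hcon (a + b) ?_ (hw_cw (hw_concat hwa (hw_reverse hwb)))
    rcases ha with ⟨x, hx⟩; rcases hb with ⟨y, hy⟩; exact ⟨x + y, by omega⟩
  have hcover : A ∪ B = univ := by
    apply Finset.eq_univ_iff_forall.mpr
    intro v
    obtain ⟨ℓ, hwv⟩ := hreach r v
    rcases Nat.even_or_odd ℓ with h | h
    · exact Finset.mem_union_left _ (Finset.mem_filter.mpr ⟨Finset.mem_univ _, ℓ, h, hwv⟩)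
    · exact Finset.mem_union_right _ (Finset.mem_filter.mpr ⟨Finset.mem_univ _, ℓ, h, hwv⟩)
  have hAB : ∀ a ∈ A, G.neighborFinset a ⊆ B := by
    intro a ha z hz
    rw [mem_neighborFinset] at hz
    rw [hA, Finset.mem_filter] at ha
    obtain ⟨-, ℓ, hℓ, hwa⟩ := ha
    refine Finset.mem_filter.mpr ⟨Finset.mem_univ _, ℓ + 1, ?_, hw_concat hwa (hw_single hz)⟩
    rcases hℓ with ⟨x, hx⟩; exact ⟨x, by omega⟩
  have hBA : ∀ b ∈ B, G.neighborFinset b ⊆ A := by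
    intro b hb z hz
    rw [mem_neighborFinset] at hz
    rw [hB, Finset.mem_filter] at hb
    obtain ⟨-, ℓ, hℓ, hwb⟩ := hb
    refine Finset.mem_filter.mpr ⟨Finset.mem_univ _, ℓ + 1, ?_, hw_concat hwb (hw_single hz)⟩
    rcases hℓ with ⟨x, hx⟩; exact ⟨x + 1, by omega⟩
  set T := (A ×ˢ B).filter (fun p => G.Adj p.1 p.2) with hT
  have hT1 : T.card = A.card * d := by
    rw [hT, Finset.card_filter, Finset.sum_product]
    have heq : ∀ a ∈ A, (∑ b ∈ B, if G.Adj a b then 1 else 0) = d := by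
      intro a ha
      rw [← Finset.card_filter]
      have : B.filter (fun b => G.Adj a b) = G.neighborFinset a := by
        ext z
        simp only [Finset.mem_filter, mem_neighborFinset]
        exact ⟨fun h => h.2, fun h => ⟨hAB a ha (((G.mem_neighborFinset _ _).mpr h)), h⟩⟩
      rw [this, hdeg]
    rw [Finset.sum_congr rfl heq, Finset.sum_const, smul_eq_mul]
  have hT2 : T.card = B.card * d := by
    rw [hT, Finset.card_filter, Finset.sum_product_right]
    have heq : ∀ b ∈ B, (∑ a ∈ A, if G.Adj a b then 1 else 0) = d := by
      intro b hb
      rw [← Finset.card_filter]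
      have : A.filter (fun a => G.Adj a b) = G.neighborFinset b := by
        ext z
        simp only [Finset.mem_filter, mem_neighborFinset]
        exact ⟨fun h => h.2.symm, fun h => ⟨hBA b hb (((G.mem_neighborFinset _ _).mpr h)), h.symm⟩⟩
      rw [this, hdeg]
    rw [Finset.sum_congr rfl heq, Finset.sum_const, smul_eq_mul]
  have hABcard : A.card = B.card := Nat.eq_of_mul_eq_mul_right hd1 (hT1.symm.trans hT2)
  have hsum : A.card + B.card = n := by
    rw [← Finset.card_union_of_disjoint hdisj, hcover]
    simp [Fintype.card_fin]
  rcases hodd with ⟨k, hk⟩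
  omega


lemma exists_pentagon
    (htri : ∀ a b c, G.Adj a b → G.Adj b c → G.Adj a c → False)
    (hdeg : ∀ v, (G.neighborFinset v).card = d)
    (h13 : 5 * n < 13 * d)
    (hex : ∃ ℓ, Odd ℓ ∧ CW G ℓ) :
    ∃ x : ZMod 5 → Fin n, ∀ i, G.Adj (x i) (x (i + 1)) := by
  classical
  have hdp : DecidablePred fun ℓ => Odd ℓ ∧ CW G ℓ := fun _ => Classical.dec _
  obtain ⟨hodd, c, hc, hadj⟩ := @Nat.find_spec _ hdp hex
  set ℓ := @Nat.find _ hdp hex with hℓdef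
  have hmin : ∀ m, m < ℓ → ¬(Odd m ∧ CW G m) := fun m hm => @Nat.find_min _ hdp hex m hm
  have hpos : 0 < ℓ := by rcases hodd with ⟨k, hk⟩; omega
  -- the arc lemma
  have harc : ∀ (c' : ℕ → Fin n), (∀ i < ℓ, G.Adj (c' i) (c' (i + 1))) →
      ∀ v a b, a < b → b < ℓ → G.Adj v (c' a) → G.Adj v (c' b) → CW G (b - a + 2) := by
    intro c' hadj' v a b hab hbl hva hvb
    refine ⟨fun t => if t = 0 then v else if t ≤ b - a + 1 then c' (a + t - 1) else v, ?_, ?_⟩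
    · have h1 : ¬(b - a + 2 = 0) := by omega
      have h2 : ¬(b - a + 2 ≤ b - a + 1) := by omega
      simp only [h1, h2, if_false, if_pos rfl]
      simp
    · intro i hi
      rcases Nat.eq_zero_or_pos i with h0 | h0
      · subst h0
        have e1 : (1 : ℕ) ≠ 0 := one_ne_zero
        have e2 : 1 ≤ b - a + 1 := by omega
        simp only [if_pos rfl, e1, if_neg e1, if_pos e2]
        have : a + 1 - 1 = a := by omega
        rw [this]
        exact hva
      · by_cases hlast : i = b - a + 1
        · subst hlast
          have e1 : b - a + 1 ≠ 0 := by omega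
          have e2 : b - a + 1 ≤ b - a + 1 := le_refl _
          have e3 : b - a + 1 + 1 ≠ 0 := by omega
          have e4 : ¬(b - a + 1 + 1 ≤ b - a + 1) := by omega
          simp only [e1, if_neg e1, if_pos e2, e3, if_neg e3, if_neg e4]
          have : a + (b - a + 1) - 1 = b := by omega
          rw [this]
          exact hvb.symm
        · have e1 : i ≠ 0 := by omega
          have e2 : i ≤ b - a + 1 := by omega
          have e3 : i + 1 ≠ 0 := by omega
          have e4 : i + 1 ≤ b - a + 1 := by omega
          simp only [if_neg e1, if_pos e2, if_neg e3, if_pos e4]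
          have r1 : a + (i + 1) - 1 = (a + i - 1) + 1 := by omega
          rw [r1]
          exact hadj' (a + i - 1) (by omega)
  -- the pair lemma
  have hpair : ∀ (v : Fin n) a b, a < b → b < ℓ → G.Adj v (c a) → G.Adj v (c b) →
      (b - a = 2 ∨ b - a = ℓ - 2) := by
    intro v a b hab hbl hva hvb
    rcases Nat.even_or_odd (b - a) with hE | hO
    · left
      obtain ⟨hc', hadj'⟩ := cw_rotate hpos hc hadj b
      set c' : ℕ → Fin n := fun i => c ((i + b) % ℓ) with hc'def
      have h0 : c' 0 = c b := by
        rw [hc'def]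
        simp only [Nat.zero_add]
        rw [Nat.mod_eq_of_lt hbl]
      have h1 : c' (ℓ - (b - a)) = c a := by
        rw [hc'def]
        simp only
        have e : ℓ - (b - a) + b = ℓ + a := by omega
        rw [e, Nat.add_mod_left, Nat.mod_eq_of_lt (by omega)]
      have hcw := harc c' hadj' v 0 (ℓ - (b - a)) (by omega) (by omega)
        (h0 ▸ hvb) (h1 ▸ hva)
      have hoddm : Odd (ℓ - (b - a) - 0 + 2) := by
        rcases hodd with ⟨k, hk⟩; rcases hE with ⟨m, hm⟩
        exact ⟨k - m + 1, by omega⟩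
      have hge : ℓ ≤ ℓ - (b - a) - 0 + 2 := by
        by_contra hlt
        push_neg at hlt
        exact hmin _ hlt ⟨hoddm, hcw⟩
      rcases hE with ⟨m, hm⟩
      omega
    · right
      have hcw := harc c hadj v a b hab hbl hva hvb
      have hodd2 : Odd (b - a + 2) := by
        rcases hO with ⟨k, hk⟩; exact ⟨k + 1, by omega⟩
      have hge : ℓ ≤ b - a + 2 := by
        by_contra hlt
        push_neg at hlt
        exact hmin _ hlt ⟨hodd2, hcw⟩
      rcases hodd with ⟨k, hk⟩; rcases hO with ⟨m, hm⟩
      omega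
  -- ℓ < 7
  have hlt7 : ℓ < 7 := by
    by_contra h7
    push_neg at h7
    have hkey : ∀ v : Fin n, ((Finset.range ℓ).filter fun i => G.Adj v (c i)).card ≤ 2 := by
      intro v
      by_contra hk
      push_neg at hk
      obtain ⟨i, hi, j, hj, k, hk', hij, hik, hjk⟩ := Finset.two_lt_card.mp hk
      simp only [Finset.mem_filter, Finset.mem_range] at hi hj hk'
      have sorted : ∀ p q r : ℕ, p < q → q < r → r < ℓ →
          G.Adj v (c p) → G.Adj v (c q) → G.Adj v (c r) → False := by
        intro p q r h1 h2 h3' a1 a2 a3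
        have g1 := hpair v p q h1 (by omega) a1 a2
        have g2 := hpair v q r h2 h3' a2 a3
        have g3 := hpair v p r (by omega) h3' a1 a3
        omega
      rcases lt_trichotomy i j with h1 | h1 | h1
      · rcases lt_trichotomy j k with h2 | h2 | h2
        · exact sorted i j k h1 h2 hk'.1 hi.2 hj.2 hk'.2
        · exact hjk h2
        · rcases lt_trichotomy i k with h3 | h3 | h3
          · exact sorted i k j h3 h2 hj.1 hi.2 hk'.2 hj.2
          · exact hik h3
          · exact sorted k i j h3 h1 hj.1 hk'.2 hi.2 hj.2
      · exact hij h1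
      · rcases lt_trichotomy i k with h2 | h2 | h2
        · exact sorted j i k h1 h2 hk'.1 hj.2 hi.2 hk'.2
        · exact hik h2
        · rcases lt_trichotomy j k with h3 | h3 | h3
          · exact sorted j k i h3 h2 hi.1 hj.2 hk'.2 hi.2
          · exact hjk h3
          · exact sorted k j i h3 h1 hi.1 hk'.2 hj.2 hi.2
    have hsum1 : ∑ i ∈ Finset.range ℓ, (G.neighborFinset (c i)).card = ℓ * d := by
      rw [Finset.sum_congr rfl (fun i _ => hdeg (c i)), Finset.sum_const, smul_eq_mul,
        Finset.card_range]
    have hsum2 : ∑ i ∈ Finset.range ℓ, (G.neighborFinset (c i)).card ≤ 2 * n := by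
      calc ∑ i ∈ Finset.range ℓ, (G.neighborFinset (c i)).card
          = ∑ i ∈ Finset.range ℓ, ∑ v : Fin n, (if G.Adj v (c i) then 1 else 0) := by
            refine Finset.sum_congr rfl fun i _ => ?_
            rw [← Finset.card_filter]
            congr 1
            ext z
            simp only [Finset.mem_filter, Finset.mem_univ, true_and]
            rw [G.mem_neighborFinset]
            exact ⟨fun h => h.symm, fun h => h.symm⟩
        _ = ∑ v : Fin n, ∑ i ∈ Finset.range ℓ, (if G.Adj v (c i) then 1 else 0) :=
            Finset.sum_comm
        _ ≤ ∑ _v : Fin n, 2 := by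
            refine Finset.sum_le_sum fun v _ => ?_
            rw [← Finset.card_filter]
            exact hkey v
        _ = 2 * n := by
            rw [Finset.sum_const, smul_eq_mul, Finset.card_univ, Fintype.card_fin]
            ring
    have h7d : 7 * d ≤ ℓ * d := Nat.mul_le_mul_right d h7
    omega
  have hne1 : ℓ ≠ 1 := by
    intro h1
    rw [h1] at hc hadj
    have := hadj 0 (by omega)
    rw [hc] at this
    exact G.irrefl this
  have hne3 : ℓ ≠ 3 := by
    intro h3
    rw [h3] at hc hadj
    have a0 := hadj 0 (by omega)
    have a1 := hadj 1 (by omega)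
    have a2 := hadj 2 (by omega)
    rw [hc] at a2
    exact htri (c 0) (c 1) (c 2) a0 a1 a2.symm
  have h5 : ℓ = 5 := by rcases hodd with ⟨k, hk⟩; omega
  rw [h5] at hc hadj
  have a0 := hadj 0 (by omega)
  have a1 := hadj 1 (by omega)
  have a2 := hadj 2 (by omega)
  have a3 := hadj 3 (by omega)
  have a4 := hadj 4 (by omega)
  rw [hc] at a4
  refine ⟨fun i => c i.val, ?_⟩
  intro i
  fin_cases i
  · exact a0
  · exact a1
  · exact a2
  · exact a3
  · exact a4


lemma main_struct
    (htri : ∀ a b c, G.Adj a b → G.Adj b c → G.Adj a c → False)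
    (hdeg : ∀ v, (G.neighborFinset v).card = d)
    (x : ZMod 5 → Fin n) (hx : ∀ i, G.Adj (x i) (x (i + 1)))
    (h13 : 5 * n < 13 * d) (h18 : 7 * n < 18 * d) (h43 : 17 * n < 43 * d) :
    ∃ f : Fin n → ZMod 5, Function.Surjective f ∧
      (∀ u v, G.Adj u v → f v = f u + 1 ∨ f v = f u + 4) ∧
      (∀ i, 53 * d ≤ 21 * n + (univ.filter fun v => f v = i).card) ∧
      (∀ i, (univ.filter fun v => f v = i).card + 17 * d ≤ 7 * n) := by
  classical
  set N : ZMod 5 → Finset (Fin n) := fun i => G.neighborFinset (x i) with hN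
  set W : ZMod 5 → Finset (Fin n) := fun i => N (i + 4) ∩ N (i + 1) with hW
  set Bf : Finset (Fin n) := univ.filter (fun v => ∀ i, v ∉ W i) with hBf
  have hmemN : ∀ (v : Fin n) (i : ZMod 5), v ∈ N i ↔ G.Adj (x i) v :=
    fun v i => G.mem_neighborFinset (x i) v
  have hmemW : ∀ (v : Fin n) (i : ZMod 5), v ∈ W i ↔ (v ∈ N (i+4) ∧ v ∈ N (i+1)) :=
    fun v i => Finset.mem_inter
  have hmemB : ∀ v : Fin n, v ∈ Bf ↔ ∀ i, v ∉ W i :=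
    fun v => ⟨fun h => (Finset.mem_filter.mp h).2,
      fun h => Finset.mem_filter.mpr ⟨Finset.mem_univ _, h⟩⟩
  have hNcard : ∀ i, (N i).card = d := fun i => hdeg (x i)
  have hNindep : ∀ (y u v : Fin n), u ∈ G.neighborFinset y → v ∈ G.neighborFinset y →
      ¬G.Adj u v := by
    intro y u v hu hv huv
    rw [G.mem_neighborFinset] at hu hv
    exact htri y u v hu huv hv
  have hcons : ∀ (v : Fin n) (i : ZMod 5), v ∈ N i → v ∈ N (i + 1) → False := by
    intro v i h1 h2
    rw [hmemN] at h1 h2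
    exact htri (x i) v (x (i+1)) h1 h2.symm (hx i)
  have hxW : ∀ i, x i ∈ W i := by
    intro i
    rw [hmemW]
    constructor
    · rw [hmemN]
      have h := hx (i + 4)
      rwa [z41] at h
    · rw [hmemN]
      exact (hx i).symm
  have hfilter2 : ∀ v : Fin n, (univ.filter fun i : ZMod 5 => v ∈ N i).card ≤ 2 := by
    intro v
    by_contra h
    push_neg at h
    obtain ⟨i, hi, j, hj, k, hk, hij, hik, hjk⟩ := Finset.two_lt_card.mp h
    simp only [Finset.mem_filter] at hi hj hk
    rcases zmod5_three i j k hij hjk hik with h'|h'|h'|h'|h'|h'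
    · exact hcons v i hi.2 (h' ▸ hj.2)
    · exact hcons v j hj.2 (h' ▸ hi.2)
    · exact hcons v j hj.2 (h' ▸ hk.2)
    · exact hcons v k hk.2 (h' ▸ hj.2)
    · exact hcons v i hi.2 (h' ▸ hk.2)
    · exact hcons v k hk.2 (h' ▸ hi.2)
  have hdisjW : ∀ i j : ZMod 5, i ≠ j → Disjoint (W i) (W j) := by
    intro i j hij
    rw [Finset.disjoint_left]
    intro v hvi hvj
    rw [hmemW] at hvi hvj
    obtain ⟨a, b, hba, ha, hb⟩ := zmod5_pairs i j hij
    have hva : v ∈ N a := by rcases ha with h|h|h|h <;> rw [h] <;> tauto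
    have hvb : v ∈ N b := by rcases hb with h|h|h|h <;> rw [h] <;> tauto
    exact hcons v a hva (hba ▸ hvb)
  -- counting: 5d + |B| ≤ 2n
  have hF : 5 * d + Bf.card ≤ 2 * n := by
    have hsum5d : ∑ i : ZMod 5, (N i).card = 5 * d := by
      rw [Finset.sum_congr rfl (fun i _ => hNcard i), Finset.sum_const, smul_eq_mul,
        Finset.card_univ]
      norm_num
    have hdouble : ∑ i : ZMod 5, (N i).card
        = ∑ v : Fin n, (univ.filter fun i : ZMod 5 => v ∈ N i).card := by
      calc ∑ i : ZMod 5, (N i).card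
          = ∑ i : ZMod 5, ∑ v : Fin n, (if v ∈ N i then 1 else 0) := by
            refine Finset.sum_congr rfl fun i _ => ?_
            rw [← Finset.card_filter, Finset.filter_univ_mem]
        _ = ∑ v : Fin n, ∑ i : ZMod 5, (if v ∈ N i then 1 else 0) := Finset.sum_comm
        _ = _ := Finset.sum_congr rfl fun v _ => (Finset.card_filter _ _).symm
    have hBcount : ∀ v ∈ Bf, (univ.filter fun i : ZMod 5 => v ∈ N i).card ≤ 1 := by
      intro v hv
      by_contra h
      push_neg at h
      obtain ⟨i1, hi1, i2, hi2, hne⟩ := Finset.one_lt_card.mp h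
      simp only [Finset.mem_filter] at hi1 hi2
      have hnc1 : ¬(i2 = i1 + 1) := fun h' => hcons v i1 hi1.2 (h' ▸ hi2.2)
      have hnc2 : ¬(i1 = i2 + 1) := fun h' => hcons v i2 hi2.2 (h' ▸ hi1.2)
      rcases zmod5_two i1 i2 with h'|h'|h'|⟨j, hj⟩
      · exact hne h'
      · exact hnc1 h'
      · exact hnc2 h'
      have : v ∈ W j := by
        rw [hmemW]
        rcases hj with ⟨h1, h2⟩ | ⟨h1, h2⟩
        · exact ⟨h2 ▸ hi2.2, h1 ▸ hi1.2⟩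
        · exact ⟨h1 ▸ hi1.2, h2 ▸ hi2.2⟩
      exact ((hmemB v).mp hv) j this
    have hsplit := Finset.sum_filter_add_sum_filter_not univ (fun v => ∀ i, v ∉ W i)
      (fun v => (univ.filter fun i : ZMod 5 => v ∈ N i).card)
    have h1 : ∑ v ∈ Bf, (univ.filter fun i : ZMod 5 => v ∈ N i).card ≤ Bf.card := by
      calc ∑ v ∈ Bf, (univ.filter fun i : ZMod 5 => v ∈ N i).card
          ≤ ∑ _v ∈ Bf, 1 := Finset.sum_le_sum hBcount
        _ = Bf.card := by rw [Finset.sum_const, smul_eq_mul, mul_one]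
    have h2 : ∑ v ∈ univ.filter (fun v => ¬ ∀ i, v ∉ W i),
        (univ.filter fun i : ZMod 5 => v ∈ N i).card
        ≤ 2 * (univ.filter (fun v : Fin n => ¬ ∀ i, v ∉ W i)).card := by
      calc ∑ v ∈ univ.filter (fun v => ¬ ∀ i, v ∉ W i),
            (univ.filter fun i : ZMod 5 => v ∈ N i).card
          ≤ ∑ _v ∈ univ.filter (fun v : Fin n => ¬ ∀ i, v ∉ W i), 2 :=
            Finset.sum_le_sum (fun v _ => hfilter2 v)
        _ = _ := by rw [Finset.sum_const, smul_eq_mul, mul_comm]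
    have h3 : Bf.card + (univ.filter (fun v : Fin n => ¬ ∀ i, v ∉ W i)).card = n := by
      rw [hBf, Finset.card_filter_add_card_filter_not, Finset.card_univ]
      simp
    rw [← hBf, ← hdouble, hsum5d] at hsplit
    omega
  -- edges between W classes
  have hWW : ∀ (i : ZMod 5) (u v : Fin n), u ∈ W i → v ∈ W i → ¬G.Adj u v := by
    intro i u v hu hv
    exact hNindep (x (i+1)) u v ((hmemW u i).mp hu).2 ((hmemW v i).mp hv).2
  have hW2 : ∀ (i : ZMod 5) (u v : Fin n), u ∈ W i → v ∈ W (i + 2) → ¬G.Adj u v := by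
    intro i u v hu hv
    have h2 := ((hmemW v (i+2)).mp hv).1
    rw [z24] at h2
    exact hNindep (x (i+1)) u v ((hmemW u i).mp hu).2 h2
  have hW3 : ∀ (i : ZMod 5) (u v : Fin n), u ∈ W i → v ∈ W (i + 3) → ¬G.Adj u v := by
    intro i u v hu hv
    have h2 := ((hmemW v (i+3)).mp hv).2
    rw [z31] at h2
    exact hNindep (x (i+4)) u v ((hmemW u i).mp hu).1 h2
  have hWadj : ∀ (i j : ZMod 5) (u v : Fin n), u ∈ W i → v ∈ W j → G.Adj u v →
      j = i + 1 ∨ j = i + 4 := by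
    intro i j u v hu hv hadj
    rcases zmod5_cases i j with h|h|h|h|h
    · exact absurd hadj (hWW i u v hu (h ▸ hv))
    · exact Or.inl h
    · exact absurd hadj (hW2 i u v hu (h ▸ hv))
    · exact absurd hadj (hW3 i u v hu (h ▸ hv))
    · exact Or.inr h
  have hNsubW : ∀ (i : ZMod 5) (u : Fin n), u ∈ W i →
      G.neighborFinset u ⊆ W (i+1) ∪ W (i+4) ∪ Bf := by
    intro i u hu z hz
    rw [G.mem_neighborFinset] at hz
    by_cases hzW : ∃ j, z ∈ W j
    · obtain ⟨j, hj⟩ := hzW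
      rcases hWadj i j u z hu hj hz with h | h
      · exact Finset.mem_union_left _ (Finset.mem_union_left _ (h ▸ hj))
      · exact Finset.mem_union_left _ (Finset.mem_union_right _ (h ▸ hj))
    · push_neg at hzW
      exact Finset.mem_union_right _ ((hmemB z).mpr hzW)
  have hpairB : ∀ j : ZMod 5, d ≤ (W (j+1)).card + (W (j+4)).card + Bf.card := by
    intro j
    have hc := Finset.card_le_card (hNsubW j (x j) (hxW j))
    rw [hdeg] at hc
    calc d ≤ ((W (j+1) ∪ W (j+4)) ∪ Bf).card := hc
      _ ≤ (W (j+1) ∪ W (j+4)).card + Bf.card := Finset.card_union_le _ _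
      _ ≤ (W (j+1)).card + (W (j+4)).card + Bf.card :=
          Nat.add_le_add_right (Finset.card_union_le _ _) _
  have hS1 : ∀ k : ZMod 5, (W k).card + (W (k+1)).card + (W (k+2)).card + (W (k+3)).card
      + (W (k+4)).card ≤ n := by
    intro k
    obtain ⟨e1, e2, e3, e4, e5, e6, e7, e8, e9, e10⟩ := znepair k
    have d1 : Disjoint (W k) (W (k+1)) := hdisjW _ _ e1
    have c1 : (W k ∪ W (k+1)).card = (W k).card + (W (k+1)).card :=
      Finset.card_union_of_disjoint d1
    have d2 : Disjoint (W k ∪ W (k+1)) (W (k+2)) :=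
      Finset.disjoint_union_left.mpr ⟨hdisjW _ _ e2, hdisjW _ _ e5⟩
    have c2 := Finset.card_union_of_disjoint d2
    have d3 : Disjoint ((W k ∪ W (k+1)) ∪ W (k+2)) (W (k+3)) :=
      Finset.disjoint_union_left.mpr ⟨Finset.disjoint_union_left.mpr
        ⟨hdisjW _ _ e3, hdisjW _ _ e6⟩, hdisjW _ _ e8⟩
    have c3 := Finset.card_union_of_disjoint d3
    have d4 : Disjoint (((W k ∪ W (k+1)) ∪ W (k+2)) ∪ W (k+3)) (W (k+4)) :=
      Finset.disjoint_union_left.mpr ⟨Finset.disjoint_union_left.mpr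
        ⟨Finset.disjoint_union_left.mpr ⟨hdisjW _ _ e4, hdisjW _ _ e7⟩,
          hdisjW _ _ e9⟩, hdisjW _ _ e10⟩
    have c4 := Finset.card_union_of_disjoint d4
    have hle := Finset.card_le_univ ((((W k ∪ W (k+1)) ∪ W (k+2)) ∪ W (k+3)) ∪ W (k+4))
    simp only [Fintype.card_fin] at hle
    omega
  have hS2 : ∀ k : ZMod 5, n ≤ (W k).card + (W (k+1)).card + (W (k+2)).card + (W (k+3)).card
      + (W (k+4)).card + Bf.card := by
    intro k
    have hcover : (univ : Finset (Fin n)) ⊆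
        ((((W k ∪ W (k+1)) ∪ W (k+2)) ∪ W (k+3)) ∪ W (k+4)) ∪ Bf := by
      intro v _
      by_cases h : ∃ i, v ∈ W i
      · obtain ⟨i, hi⟩ := h
        rcases zmod5_cases k i with h'|h'|h'|h'|h' <;> rw [h'] at hi
        · exact Finset.mem_union_left _ (Finset.mem_union_left _ (Finset.mem_union_left _
            (Finset.mem_union_left _ (Finset.mem_union_left _ hi))))
        · exact Finset.mem_union_left _ (Finset.mem_union_left _ (Finset.mem_union_left _
            (Finset.mem_union_left _ (Finset.mem_union_right _ hi))))
        · exact Finset.mem_union_left _ (Finset.mem_union_left _ (Finset.mem_union_left _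
            (Finset.mem_union_right _ hi)))
        · exact Finset.mem_union_left _ (Finset.mem_union_left _ (Finset.mem_union_right _ hi))
        · exact Finset.mem_union_left _ (Finset.mem_union_right _ hi)
      · push_neg at h
        exact Finset.mem_union_right _ ((hmemB v).mpr h)
    have hle := Finset.card_le_card hcover
    rw [Finset.card_univ] at hle
    simp only [Fintype.card_fin] at hle
    have t1 := Finset.card_union_le ((((W k ∪ W (k+1)) ∪ W (k+2)) ∪ W (k+3)) ∪ W (k+4)) Bf
    have t2 := Finset.card_union_le (((W k ∪ W (k+1)) ∪ W (k+2)) ∪ W (k+3)) (W (k+4))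
    have t3 := Finset.card_union_le ((W k ∪ W (k+1)) ∪ W (k+2)) (W (k+3))
    have t4 := Finset.card_union_le (W k ∪ W (k+1)) (W (k+2))
    have t5 := Finset.card_union_le (W k) (W (k+1))
    omega
  -- no neighbours in consecutive classes
  have hNoCons : ∀ (v : Fin n) (i : ZMod 5), (∃ u ∈ W i, G.Adj v u) →
      (∃ w ∈ W (i+1), G.Adj v w) → False := by
    rintro v i ⟨u, hu, hvu⟩ ⟨w, hw, hvw⟩
    have dvu : Disjoint (G.neighborFinset v) (G.neighborFinset u) := by
      rw [Finset.disjoint_left]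
      intro z h1 h2
      rw [G.mem_neighborFinset] at h1 h2
      exact htri v z u h1 h2.symm hvu
    have dvw : Disjoint (G.neighborFinset v) (G.neighborFinset w) := by
      rw [Finset.disjoint_left]
      intro z h1 h2
      rw [G.mem_neighborFinset] at h1 h2
      exact htri v z w h1 h2.symm hvw
    have huw : (G.neighborFinset u ∩ G.neighborFinset w) ⊆ Bf := by
      intro z hz
      rw [Finset.mem_inter] at hz
      have hz1 := hNsubW i u hu hz.1
      have hz2 := hNsubW (i+1) w hw hz.2
      simp only [Finset.mem_union] at hz1 hz2
      obtain ⟨e1, e2, e3, e4, e5, e6, e7, e8, e9, e10⟩ := znepair i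
      rcases hz1 with (h1|h1)|h1
      · rcases hz2 with (h2|h2)|h2
        · rw [z11] at h2
          exact absurd h2 (Finset.disjoint_left.mp (hdisjW _ _ e5) h1)
        · rw [z14] at h2
          exact absurd h1 (Finset.disjoint_left.mp (hdisjW _ _ e1) h2)
        · exact h2
      · rcases hz2 with (h2|h2)|h2
        · rw [z11] at h2
          exact absurd h1 (Finset.disjoint_left.mp (hdisjW _ _ e9) h2)
        · rw [z14] at h2
          exact absurd h1 (Finset.disjoint_left.mp (hdisjW _ _ e4) h2)
        · exact h2
      · exact h1
    have hUcard := Finset.card_union_add_card_inter (G.neighborFinset u) (G.neighborFinset w)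
    rw [hdeg, hdeg] at hUcard
    have hBle := Finset.card_le_card huw
    have hdisj2 : Disjoint (G.neighborFinset v) (G.neighborFinset u ∪ G.neighborFinset w) :=
      Finset.disjoint_union_right.mpr ⟨dvu, dvw⟩
    have htot := Finset.card_le_univ (G.neighborFinset v ∪ (G.neighborFinset u ∪ G.neighborFinset w))
    rw [Finset.card_union_of_disjoint hdisj2, hdeg] at htot
    simp only [Fintype.card_fin] at htot
    omega
  -- every B vertex sees exactly the classes j+1 and j+4 for a unique j
  have hQ : ∀ v ∈ Bf, ∃ j : ZMod 5, ∀ k, (∃ u ∈ W k, G.Adj v u) → k = j + 1 ∨ k = j + 4 := by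
    intro v hv
    by_cases h2c : ∃ i1 i2 : ZMod 5, i1 ≠ i2 ∧ (∃ u ∈ W i1, G.Adj v u) ∧ (∃ u ∈ W i2, G.Adj v u)
    · obtain ⟨i1, i2, hne, m1, m2⟩ := h2c
      have hnc1 : ¬(i2 = i1 + 1) := fun h => hNoCons v i1 m1 (h ▸ m2)
      have hnc2 : ¬(i1 = i2 + 1) := fun h => hNoCons v i2 m2 (h ▸ m1)
      rcases zmod5_two i1 i2 with h'|h'|h'|⟨j, hj⟩
      · exact absurd h' hne
      · exact absurd h' hnc1
      · exact absurd h' hnc2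
      refine ⟨j, fun k hk => ?_⟩
      by_cases hk1 : k = i1
      · rcases hj with ⟨h1, _⟩|⟨h1, _⟩
        · exact Or.inl (hk1.trans h1)
        · exact Or.inr (hk1.trans h1)
      by_cases hk2 : k = i2
      · rcases hj with ⟨_, h2⟩|⟨_, h2⟩
        · exact Or.inr (hk2.trans h2)
        · exact Or.inl (hk2.trans h2)
      exfalso
      have a1 : ¬(k = i1+1) := fun h => hNoCons v i1 m1 (h ▸ hk)
      have a2 : ¬(i1 = k+1) := fun h => hNoCons v k hk (h ▸ m1)
      have a3 : ¬(k = i2+1) := fun h => hNoCons v i2 m2 (h ▸ hk)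
      have a4 : ¬(i2 = k+1) := fun h => hNoCons v k hk (h ▸ m2)
      rcases zmod5_impossible i1 i2 k with h|h|h|h|h|h|h|h|h
      exacts [hne h, hk1 h, hk2 h, hnc1 h, hnc2 h, a1 h, a2 h, a3 h, a4 h]
    · exfalso
      push_neg at h2c
      by_cases hm : ∃ i, (∃ u ∈ W i, G.Adj v u)
      · obtain ⟨i0, hm0⟩ := hm
        have hsub : G.neighborFinset v ⊆ W i0 ∪ Bf := by
          intro z hz
          rw [G.mem_neighborFinset] at hz
          by_cases hzW : ∃ j, z ∈ W j
          · obtain ⟨j, hj⟩ := hzW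
            have hji : j = i0 := by
              by_contra hne
              obtain ⟨u0, hu0, hadj0⟩ := hm0
              exact h2c j i0 hne ⟨z, hj, hz⟩ u0 hu0 hadj0
            exact Finset.mem_union_left _ (hji ▸ hj)
          · push_neg at hzW
            exact Finset.mem_union_right _ ((hmemB z).mpr hzW)
        have hc := Finset.card_le_card hsub
        rw [hdeg] at hc
        have hc2 := le_trans hc (Finset.card_union_le _ _)
        have hb1 := hpairB (i0+2)
        rw [z21, z24] at hb1
        have hb2 := hpairB (i0+3)
        rw [z31, z34] at hb2
        have hs := hS1 i0
        omega
      · push_neg at hm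
        have hsub : G.neighborFinset v ⊆ Bf := by
          intro z hz
          rw [G.mem_neighborFinset] at hz
          by_cases hzW : ∃ j, z ∈ W j
          · obtain ⟨j, hj⟩ := hzW
            exact absurd hz (hm j z hj)
          · push_neg at hzW
            exact (hmemB z).mpr hzW
        have hc := Finset.card_le_card hsub
        rw [hdeg] at hc
        omega
  -- the colouring
  have hchoice : ∀ v : Fin n, ∃ j : ZMod 5, ((∃ i, v ∈ W i) → v ∈ W j) ∧
      ((∀ i, v ∉ W i) → ∀ k, (∃ u ∈ W k, G.Adj v u) → k = j + 1 ∨ k = j + 4) := by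
    intro v
    by_cases h : ∃ i, v ∈ W i
    · obtain ⟨i, hi⟩ := h
      exact ⟨i, fun _ => hi, fun hB => absurd hi (hB i)⟩
    · push_neg at h
      obtain ⟨j, hj⟩ := hQ v ((hmemB v).mpr h)
      refine ⟨j, fun hex => ?_, fun _ => hj⟩
      exfalso
      obtain ⟨i, hi⟩ := hex
      exact h i hi
  choose f hf1 hf2 using hchoice
  have hfW : ∀ (v : Fin n) (i : ZMod 5), v ∈ W i → f v = i := by
    intro v i hvi
    have h := hf1 v ⟨i, hvi⟩
    by_contra hne
    exact (Finset.disjoint_left.mp (hdisjW _ _ hne) h) hvi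
  have hfB : ∀ v : Fin n, (∀ i, v ∉ W i) →
      ∀ k, (∃ u ∈ W k, G.Adj v u) → k = f v + 1 ∨ k = f v + 4 := hf2
  have hom : ∀ u v : Fin n, G.Adj u v → f v = f u + 1 ∨ f v = f u + 4 := by
    intro u v huv
    by_cases hu : ∃ i, u ∈ W i
    · obtain ⟨i, hi⟩ := hu
      rw [hfW u i hi]
      by_cases hv : ∃ j, v ∈ W j
      · obtain ⟨j, hj⟩ := hv
        rw [hfW v j hj]
        exact hWadj i j u v hi hj huv
      · push_neg at hv
        rcases hfB v hv i ⟨u, hi, huv.symm⟩ with h | h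
        · right
          rw [h, z14]
        · left
          rw [h, z41]
    · push_neg at hu
      by_cases hv : ∃ j, v ∈ W j
      · obtain ⟨j, hj⟩ := hv
        rw [hfW v j hj]
        exact hfB u hu j ⟨v, hj, huv⟩
      · push_neg at hv
        have hdisjnb : Disjoint (G.neighborFinset u) (G.neighborFinset v) := by
          rw [Finset.disjoint_left]
          intro z h1 h2
          rw [G.mem_neighborFinset] at h1 h2
          exact htri u z v h1 h2.symm huv
        have hsubgen : ∀ (w : Fin n), (∀ i, w ∉ W i) →
            G.neighborFinset w ⊆ W (f w + 1) ∪ W (f w + 4) ∪ Bf := by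
          intro w hw z hz
          rw [G.mem_neighborFinset] at hz
          by_cases hzW : ∃ j', z ∈ W j'
          · obtain ⟨j', hj'⟩ := hzW
            rcases hfB w hw j' ⟨z, hj', hz⟩ with h|h
            · exact Finset.mem_union_left _ (Finset.mem_union_left _ (h ▸ hj'))
            · exact Finset.mem_union_left _ (Finset.mem_union_right _ (h ▸ hj'))
          · push_neg at hzW
            exact Finset.mem_union_right _ ((hmemB z).mpr hzW)
        have hsubu := hsubgen u hu
        have hsubv := hsubgen v hv
        have key2d : ∀ (a b c' : ZMod 5),
            G.neighborFinset u ⊆ W a ∪ W b ∪ Bf →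
            G.neighborFinset v ⊆ W a ∪ W c' ∪ Bf →
            2*d ≤ (W a).card + (W b).card + (W c').card + Bf.card := by
          intro a b c' hh1 hh2
          have hsub : G.neighborFinset u ∪ G.neighborFinset v ⊆ ((W a ∪ W b) ∪ W c') ∪ Bf := by
            intro z hz
            rcases Finset.mem_union.mp hz with h | h
            · have h' := hh1 h
              simp only [Finset.mem_union] at h' ⊢
              rcases h' with (h'|h')|h'
              exacts [Or.inl (Or.inl (Or.inl h')), Or.inl (Or.inl (Or.inr h')), Or.inr h']
            · have h' := hh2 h
              simp only [Finset.mem_union] at h' ⊢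
              rcases h' with (h'|h')|h'
              exacts [Or.inl (Or.inl (Or.inl h')), Or.inl (Or.inr h'), Or.inr h']
          have hcc := Finset.card_le_card hsub
          rw [Finset.card_union_of_disjoint hdisjnb, hdeg, hdeg] at hcc
          have t1 := Finset.card_union_le ((W a ∪ W b)) (W c')
          have t2 := Finset.card_union_le (W a) (W b)
          have t3 := Finset.card_union_le ((W a ∪ W b) ∪ W c') Bf
          omega
        have hb0 := hpairB (f u)
        have hb1 := hpairB (f u+1)
        rw [z11, z14] at hb1
        have hb2 := hpairB (f u+2)
        rw [z21, z24] at hb2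
        have hb3 := hpairB (f u+3)
        rw [z31, z34] at hb3
        have hb4 := hpairB (f u+4)
        rw [z41, z44] at hb4
        have hs := hS1 (f u)
        rcases zmod5_cases (f u) (f v) with h|h|h|h|h
        · exfalso
          rw [h] at hsubv
          have := key2d (f u + 1) (f u + 4) (f u + 4) hsubu hsubv
          omega
        · exact Or.inl h
        · exfalso
          rw [h, z21, z24] at hsubv
          rw [Finset.union_comm (W (f u + 3)) (W (f u + 1))] at hsubv
          have := key2d (f u + 1) (f u + 4) (f u + 3) hsubu hsubv
          omega
        · exfalso
          rw [h, z31, z34] at hsubv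
          rw [Finset.union_comm (W (f u + 1)) (W (f u + 4))] at hsubu
          have := key2d (f u + 4) (f u + 1) (f u + 2) hsubu hsubv
          omega
        · exact Or.inr h
  refine ⟨f, ?_, hom, ?_, ?_⟩
  · intro i
    exact ⟨x i, hfW _ _ (hxW i)⟩
  · intro i
    have hWsub : W i ⊆ univ.filter (fun v => f v = i) := by
      intro v hv
      exact Finset.mem_filter.mpr ⟨Finset.mem_univ _, hfW v i hv⟩
    have hcle := Finset.card_le_card hWsub
    have hb0 := hpairB i
    have hb1 := hpairB (i+1)
    rw [z11, z14] at hb1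
    have hb2 := hpairB (i+2)
    rw [z21, z24] at hb2
    have hb3 := hpairB (i+3)
    rw [z31, z34] at hb3
    have hb4 := hpairB (i+4)
    rw [z41, z44] at hb4
    have hs1 := hS1 i
    have hs2 := hS2 i
    omega
  · intro i
    have hsub : univ.filter (fun v => f v = i) ⊆ W i ∪ Bf := by
      intro v hv
      have hfv := (Finset.mem_filter.mp hv).2
      by_cases h : ∃ j, v ∈ W j
      · obtain ⟨j, hj⟩ := h
        have := hfW v j hj
        rw [hfv] at this
        exact Finset.mem_union_left _ (this ▸ hj)
      · push_neg at h
        exact Finset.mem_union_right _ ((hmemB v).mpr h)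
    have hcle := le_trans (Finset.card_le_card hsub) (Finset.card_union_le _ _)
    have hb1 := hpairB (i+1)
    rw [z11, z14] at hb1
    have hb2 := hpairB (i+2)
    rw [z21, z24] at hb2
    have hb3 := hpairB (i+3)
    rw [z31, z34] at hb3
    have hs1 := hS1 i
    omega


end Graph
end RegStab

open RegStab

set_option maxHeartbeats 1000000 in
/-- **stability of the regular triangle-free problem for odd `n`.**
For every `ε > 0` there are `δ > 0` and `n₀` such that for every odd `n ≥ n₀`, every
`d`-regular triangle-free graph `G` on `n` vertices with `d ≥ (2/5 - δ)n` admits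
pairwise disjoint vertex sets `V₀, …, V₄` (indexed by `ZMod 5`), each of size at least
`(1/5 - ε)n`, with no edges inside any `Vᵢ` nor between `Vᵢ` and `V_{i+2}` or `V_{i+3}`,
and every vertex of `Vᵢ` having at least `(1/5 - ε)n` neighbours in each of `V_{i+1}`
and `V_{i+4}`; in particular `G` is a spanning subgraph of an `n`-vertex blow-up
of `C₅`. -/
theorem regular_triangleFree_stability :
    ∀ ε : ℝ, 0 < ε → ∃ δ : ℝ, 0 < δ ∧ ∃ n₀ : ℕ, ∀ n : ℕ, n₀ ≤ n → Odd n →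
      ∀ (d : ℕ) (G : SimpleGraph (Fin n)),
        (∀ v : Fin n, Nat.card (G.neighborSet v) = d) →
        G.CliqueFree 3 →
        (2 / 5 - δ) * (n : ℝ) ≤ (d : ℝ) →
        (∃ V : ZMod 5 → Set (Fin n),
          (∀ i j : ZMod 5, i ≠ j → Disjoint (V i) (V j)) ∧
          (∀ i : ZMod 5, (1 / 5 - ε) * (n : ℝ) ≤ ((V i).ncard : ℝ)) ∧
          (∀ i : ZMod 5, ∀ u ∈ V i, ∀ v ∈ V i, ¬ G.Adj u v) ∧
          (∀ i : ZMod 5, ∀ u ∈ V i, ∀ v ∈ V (i + 2), ¬ G.Adj u v) ∧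
          (∀ i : ZMod 5, ∀ u ∈ V i, ∀ v ∈ V (i + 3), ¬ G.Adj u v) ∧
          (∀ i : ZMod 5, ∀ u ∈ V i,
            (1 / 5 - ε) * (n : ℝ) ≤ ((G.neighborSet u ∩ V (i + 1)).ncard : ℝ) ∧
            (1 / 5 - ε) * (n : ℝ) ≤ ((G.neighborSet u ∩ V (i + 4)).ncard : ℝ))) ∧
        (∃ f : Fin n → ZMod 5, Function.Surjective f ∧
          ∀ u v : Fin n, G.Adj u v → f u = f v + 1 ∨ f v = f u + 1) := by
  intro ε hε
  refine ⟨min ε 1 / 1000, by positivity, 1000, ?_⟩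
  intro n hn hodd d G hdeg' hCF hd
  classical
  haveI : DecidableRel G.Adj := Classical.decRel _
  set δ : ℝ := min ε 1 / 1000 with hδdef
  have hδpos : 0 < δ := by positivity
  have hδ1 : δ ≤ 1 / 1000 := by
    rw [hδdef]
    have : min ε 1 ≤ 1 := min_le_right _ _
    linarith
  have hδε : (53 : ℝ) * δ ≤ ε := by
    have h1 : min ε 1 ≤ ε := min_le_left _ _
    rw [hδdef]
    linarith
  have hdeg : ∀ v, (G.neighborFinset v).card = d := by
    intro v
    rw [neighborFinset_def, Set.toFinset_card, ← Nat.card_eq_fintype_card, hdeg' v]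
  have htri : ∀ a b c : Fin n, G.Adj a b → G.Adj b c → G.Adj a c → False := by
    intro a b c hab hbc hac
    exact hCF {a, b, c} (SimpleGraph.is3Clique_triple_iff.mpr ⟨hab, hac, hbc⟩)
  -- numeric conversions
  have hnR : (1000 : ℝ) ≤ (n : ℝ) := by exact_mod_cast hn
  have hn0 : (0 : ℝ) ≤ (n : ℝ) := by linarith
  have hδn : δ * (n : ℝ) ≤ (1 / 1000) * (n : ℝ) :=
    mul_le_mul_of_nonneg_right hδ1 hn0
  have hdR : (399 : ℝ) / 1000 * (n : ℝ) ≤ (d : ℝ) := by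
    have := hd
    nlinarith
  have h13 : 5 * n < 13 * d := by
    have : (5 * n : ℝ) < 13 * d := by nlinarith
    exact_mod_cast this
  have h18 : 7 * n < 18 * d := by
    have : (7 * n : ℝ) < 18 * d := by nlinarith
    exact_mod_cast this
  have h43 : 17 * n < 43 * d := by
    have : (17 * n : ℝ) < 43 * d := by nlinarith
    exact_mod_cast this
  have h3 : n < 3 * d := by omega
  have hd1 : 0 < d := by omega
  have hreach := reach htri hdeg h3
  have hexodd := exists_oddCW hodd hdeg hd1 hreach
  obtain ⟨x, hx⟩ := exists_pentagon htri hdeg h13 hexodd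
  obtain ⟨f, hsurj, hom, out1, out2⟩ := main_struct htri hdeg x hx h13 h18 h43
  have hmem : ∀ (u : Fin n) (i : ZMod 5),
      u ∈ (↑(univ.filter fun v => f v = i) : Set (Fin n)) ↔ f u = i := by
    intro u i
    rw [Finset.mem_coe, Finset.mem_filter]
    exact ⟨fun h => h.2, fun h => ⟨Finset.mem_univ _, h⟩⟩
  constructor
  · refine ⟨fun i => ↑(univ.filter fun v => f v = i), ?_, ?_, ?_, ?_, ?_, ?_⟩
    · intro i j hij
      rw [Set.disjoint_left]
      intro a ha hb
      rw [hmem] at ha hb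
      exact hij (ha ▸ hb ▸ rfl)
    · intro i
      rw [Set.ncard_coe_finset]
      have h1 := out1 i
      have h1R : (53 : ℝ) * d ≤ 21 * n + ((univ.filter fun v => f v = i).card : ℝ) := by
        exact_mod_cast h1
      nlinarith
    · intro i u hu v hv hadj
      rw [hmem] at hu hv
      rcases hom u v hadj with h | h
      · rw [hu, hv] at h
        exact (znepair i).1 h
      · rw [hu, hv] at h
        exact (znepair i).2.2.2.1 h
    · intro i u hu v hv hadj
      rw [hmem] at hu hv
      rcases hom u v hadj with h | h
      · rw [hu, hv] at h
        exact (znepair i).2.2.2.2.1 h.symm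
      · rw [hu, hv] at h
        exact (znepair i).2.2.2.2.2.2.2.2.1 h
    · intro i u hu v hv hadj
      rw [hmem] at hu hv
      rcases hom u v hadj with h | h
      · rw [hu, hv] at h
        exact (znepair i).2.2.2.2.2.1 h.symm
      · rw [hu, hv] at h
        exact (znepair i).2.2.2.2.2.2.2.2.2 h
    · intro i u hu
      rw [hmem] at hu
      -- nat inequality: d ≤ |N u ∩ Vf (i+1)| + |N u ∩ Vf (i+4)|
      have hsplit : G.neighborFinset u ⊆
          (G.neighborFinset u ∩ (univ.filter fun v => f v = i + 1)) ∪
          (G.neighborFinset u ∩ (univ.filter fun v => f v = i + 4)) := by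
        intro z hz
        have hadj := (G.mem_neighborFinset u z).mp hz
        rcases hom u z hadj with h | h
        · exact Finset.mem_union_left _ (Finset.mem_inter.mpr
            ⟨hz, Finset.mem_filter.mpr ⟨Finset.mem_univ _, by rw [h, hu]⟩⟩)
        · exact Finset.mem_union_right _ (Finset.mem_inter.mpr
            ⟨hz, Finset.mem_filter.mpr ⟨Finset.mem_univ _, by rw [h, hu]⟩⟩)
      have hdle := Finset.card_le_card hsplit
      rw [hdeg] at hdle
      have hdle2 := le_trans hdle (Finset.card_union_le _ _)
      have hb1 : (G.neighborFinset u ∩ (univ.filter fun v => f v = i + 1)).card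
          ≤ (univ.filter fun v => f v = i + 1).card :=
        Finset.card_le_card Finset.inter_subset_right
      have hb4 : (G.neighborFinset u ∩ (univ.filter fun v => f v = i + 4)).card
          ≤ (univ.filter fun v => f v = i + 4).card :=
        Finset.card_le_card Finset.inter_subset_right
      have ho1 := out2 (i + 1)
      have ho4 := out2 (i + 4)
      have hset : ∀ j : ZMod 5, (G.neighborSet u ∩ ↑(univ.filter fun v => f v = j))
          = ↑(G.neighborFinset u ∩ (univ.filter fun v => f v = j)) := by
        intro j
        rw [Finset.coe_inter, neighborFinset_def, Set.coe_toFinset]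
      constructor
      · rw [hset, Set.ncard_coe_finset]
        have c1 : d ≤ (G.neighborFinset u ∩ (univ.filter fun v => f v = i + 1)).card
            + (univ.filter fun v => f v = i + 4).card := by omega
        have c1R : (d : ℝ) ≤
            ((G.neighborFinset u ∩ (univ.filter fun v => f v = i + 1)).card : ℝ)
            + ((univ.filter fun v => f v = i + 4).card : ℝ) := by exact_mod_cast c1
        have ho4R : ((univ.filter fun v => f v = i + 4).card : ℝ) + 17 * d ≤ 7 * n := by
          exact_mod_cast ho4
        nlinarith
      · rw [hset, Set.ncard_coe_finset]
        have c4 : d ≤ (G.neighborFinset u ∩ (univ.filter fun v => f v = i + 4)).card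
            + (univ.filter fun v => f v = i + 1).card := by omega
        have c4R : (d : ℝ) ≤
            ((G.neighborFinset u ∩ (univ.filter fun v => f v = i + 4)).card : ℝ)
            + ((univ.filter fun v => f v = i + 1).card : ℝ) := by exact_mod_cast c4
        have ho1R : ((univ.filter fun v => f v = i + 1).card : ℝ) + 17 * d ≤ 7 * n := by
          exact_mod_cast ho1
        nlinarith
  · refine ⟨f, hsurj, ?_⟩
    intro u v hadj
    rcases hom u v hadj with h | h
    · exact Or.inr h
    · exact Or.inl ((zflip _ _).mp h)
end

section
/- Let n be an odd positive integer and let G be a d-regular triangle-free graph on n vertices with d ≥ 1. Then d ≤ 2n/5. -/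
open SimpleGraph Finset

variable {V : Type*}

lemma succ_mod_eq (t M : ℕ) (hM : 1 < M) :
    (t + 1) % M = (t % M + 1) % M := by
  conv_lhs => rw [Nat.add_mod, Nat.mod_eq_of_lt hM]

/-- A closed walk of length `L`, presented as a periodic sequence. -/
def IsCW (G : SimpleGraph V) (L : ℕ) : Prop :=
  ∃ F : ℕ → V, (∀ t, F (t + L) = F t) ∧ ∀ t, G.Adj (F t) (F (t + 1))

lemma isCW_of_walk {G : SimpleGraph V} {u : V} (w : G.Walk u u) (hw : 0 < w.length) :
    IsCW G w.length := by
  rcases eq_or_lt_of_le (Nat.succ_le_of_lt hw) with h1l | h1l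
  · exfalso
    have hadj := w.adj_getVert_succ hw
    rw [show (0:ℕ) + 1 = w.length from h1l] at hadj
    rw [w.getVert_zero, w.getVert_length] at hadj
    exact G.irrefl hadj
  refine ⟨fun t => w.getVert (t % w.length), fun t => by simp [Nat.add_mod_right], fun t => ?_⟩
  have hr : t % w.length < w.length := Nat.mod_lt _ (by omega)
  have hadj := w.adj_getVert_succ hr
  have hs := succ_mod_eq t w.length h1l
  rcases eq_or_lt_of_le (Nat.succ_le_of_lt hr) with h | h
  · have h' : t % w.length + 1 = w.length := h
    have h1 : (t + 1) % w.length = 0 := by rw [hs, h', Nat.mod_self]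
    simp only [h1]
    rw [h'] at hadj
    simpa [w.getVert_length] using hadj
  · have h1 : (t + 1) % w.length = t % w.length + 1 := by rw [hs, Nat.mod_eq_of_lt h]
    simpa [h1] using hadj

/-- Arc completion: two neighbors of `v` at positions `p` and `p+g` along a
periodic adjacency sequence give a closed walk of length `g+2`. -/
lemma isCW_arc {G : SimpleGraph V} {F : ℕ → V} (hadj : ∀ t, G.Adj (F t) (F (t + 1)))
    {v : V} {p g : ℕ} (h1 : G.Adj v (F p)) (h2 : G.Adj v (F (p + g))) :
    IsCW G (g + 2) := by
  set M := g + 2 with hM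
  refine ⟨fun t => if t % M = 0 then v else F (p + t % M - 1), fun t => by
    simp [Nat.add_mod_right], fun t => ?_⟩
  have hr : t % M < M := Nat.mod_lt _ (by omega)
  have hs := succ_mod_eq t M (by omega)
  rcases Nat.eq_or_lt_of_le (Nat.succ_le_of_lt hr) with h | h
  · -- t % M = M - 1 = g + 1
    have h' : t % M + 1 = M := h
    have h1' : (t + 1) % M = 0 := by rw [hs, h', Nat.mod_self]
    have h2' : t % M = g + 1 := by omega
    have e : p + (g + 1) - 1 = p + g := by omega
    simpa [h1', h2', e] using h2.symm
  · have h1' : (t + 1) % M = t % M + 1 := by rw [hs, Nat.mod_eq_of_lt h]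
    rcases Nat.eq_zero_or_pos (t % M) with h0 | h0
    · simpa [h0, h1'] using h1
    · have hne : ¬ (t % M = 0) := by omega
      have hne' : ¬ (t % M + 1 = 0) := by omega
      have e : p + (t % M + 1) - 1 = (p + t % M - 1) + 1 := by omega
      simp only [h1', if_neg hne, if_neg hne', e]
      exact hadj _

lemma exists_odd_isCW [Fintype V] [DecidableEq V] (G : SimpleGraph V) [DecidableRel G.Adj] {d : ℕ} (hd : 1 ≤ d)
    (hdeg : ∀ v : V, (Finset.univ.filter (fun w => G.Adj v w)).card = d)
    (hodd : Odd (Fintype.card V)) : ∃ L, Odd L ∧ IsCW G L := by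
  classical
  by_contra hno
  push_neg at hno
  -- all walks between two fixed vertices have the same length parity
  have parity : ∀ (x y : V) (p q : G.Walk x y), Even (p.length + q.length) := by
    intro x y p q
    by_contra hodd'
    rw [Nat.not_even_iff_odd] at hodd'
    have hlen : (p.append q.reverse).length = p.length + q.length := by
      simp [Walk.length_append, Walk.length_reverse]
    refine hno _ (hlen ▸ hodd') (isCW_of_walk _ ?_)
    rw [hlen]
    rcases hodd' with ⟨k, hk⟩
    omega
  set f : V → V := fun v => (G.connectedComponentMk v).out with hf
  have hrep : ∀ v, G.Reachable (f v) v := by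
    intro v
    exact ConnectedComponent.exact (Quot.out_eq _)
  set P : V → Prop := fun v => ∃ w : G.Walk (f v) v, Odd w.length with hP
  have key : ∀ (a b : V), G.Adj a b → ∀ w : G.Walk (f a) a, Odd w.length →
      ∀ w' : G.Walk (f a) b, ¬ Odd w'.length := by
    intro a b hab w hw w' hw'
    have hpar := parity (f a) b (w.concat hab) w'
    rw [Walk.length_concat] at hpar
    rw [Nat.even_iff] at hpar
    rw [Nat.odd_iff] at hw hw'
    omega
  have hcol : ∀ u v, G.Adj u v → (P u ↔ ¬ P v) := by
    intro u v h
    have ef : f u = f v := congrArg Quot.out (ConnectedComponent.sound h.reachable)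
    simp only [hP]
    rw [← ef]
    constructor
    · rintro ⟨w, hw⟩ ⟨w', hw'⟩
      exact key u v h w hw w' hw'
    · intro hnv
      have w0 : G.Walk (f u) u := (hrep u).some
      rcases Nat.even_or_odd w0.length with he | ho
      · exact absurd ⟨w0.concat h, by rw [Walk.length_concat]; exact he.add_one⟩ hnv
      · exact ⟨w0, ho⟩
  set A : Finset V := Finset.univ.filter P with hA
  set B : Finset V := Finset.univ.filter (fun v => ¬ P v) with hB
  have hABcard : A.card + B.card = Fintype.card V := by
    rw [hA, hB, Finset.card_filter_add_card_filter_not, Finset.card_univ]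
  have hsum : A.card * d = B.card * d := by
    calc A.card * d = ∑ _u ∈ A, d := by rw [Finset.sum_const, smul_eq_mul]
      _ = ∑ u ∈ A, ∑ w : V, ite (G.Adj u w) 1 0 := by
          refine Finset.sum_congr rfl fun u _ => ?_
          rw [← hdeg u, Finset.card_filter]
      _ = ∑ w : V, ∑ u ∈ A, ite (G.Adj u w) 1 0 := Finset.sum_comm
      _ = ∑ w ∈ B, ∑ u ∈ A, ite (G.Adj u w) 1 0 := by
          symm
          refine Finset.sum_subset (Finset.filter_subset _ _) fun w _ hwB => ?_
          refine Finset.sum_eq_zero fun u huA => ?_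
          rw [hA, Finset.mem_filter] at huA
          rw [hB, Finset.mem_filter] at hwB
          push_neg at hwB
          have hPw : P w := hwB (Finset.mem_univ w)
          by_cases hadj : G.Adj u w
          · exact absurd hPw ((hcol u w hadj).mp huA.2)
          · simp [hadj]
      _ = ∑ w ∈ B, ∑ u : V, ite (G.Adj u w) 1 0 := by
          refine Finset.sum_congr rfl fun w hwB => ?_
          refine Finset.sum_subset (Finset.subset_univ _) fun u _ huA => ?_
          rw [hA, Finset.mem_filter] at huA
          push_neg at huA
          have hnPu : ¬ P u := huA (Finset.mem_univ u)
          rw [hB, Finset.mem_filter] at hwB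
          by_cases hadj : G.Adj u w
          · exact absurd ((hcol u w hadj).mpr hwB.2) hnPu
          · simp [hadj]
      _ = ∑ w ∈ B, d := by
          refine Finset.sum_congr rfl fun w _ => ?_
          rw [← hdeg w, Finset.card_filter]
          exact Finset.sum_congr rfl fun u _ => if_congr (G.adj_comm u w) rfl rfl
      _ = B.card * d := by rw [Finset.sum_const, smul_eq_mul]
  have hcard : A.card = B.card := Nat.eq_of_mul_eq_mul_right (by omega) hsum
  rw [Nat.odd_iff] at hodd
  omega

/-- If `n` is odd and `G` is a `d`-regular triangle-free graph on `n`
vertices with `d ≥ 1`, then `d ≤ 2n/5`. -/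
theorem regular_triangleFree_odd_degree_bound (n d : ℕ) (hn : Odd n) (hd : 1 ≤ d)
    (G : SimpleGraph (Fin n))
    (hreg : ∀ v : Fin n, Nat.card (G.neighborSet v) = d)
    (hfree : G.CliqueFree 3) :
    (d : ℝ) ≤ 2 * (n : ℝ) / 5 := by
  classical
  have hdeg : ∀ v : Fin n, (Finset.univ.filter (fun w => G.Adj v w)).card = d := by
    intro v
    rw [← hreg v, Nat.card_eq_fintype_card]
    exact (Fintype.card_subtype _).symm
  have hodd : Odd (Fintype.card (Fin n)) := by simpa using hn
  have hex : ∃ L, Odd L ∧ IsCW G L := exists_odd_isCW G hd hdeg hodd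
  set L := Nat.find hex with hLdef
  obtain ⟨hLodd, F, hper, hadjF⟩ := Nat.find_spec hex
  have hmin : ∀ M, Odd M → IsCW G M → L ≤ M := fun M h1 h2 => Nat.find_min' hex ⟨h1, h2⟩
  rw [← hLdef] at hLodd hper
  have hL2 : L % 2 = 1 := Nat.odd_iff.mp hLodd
  have hL1 : L ≠ 1 := by
    intro h
    rw [h] at hper
    have h0 := hadjF 0
    rw [hper 0] at h0
    exact G.irrefl h0
  have hL3 : L ≠ 3 := by
    intro h
    rw [h] at hper
    refine hfree {F 0, F 1, F 2} (is3Clique_triple_iff.mpr ⟨?_, ?_, ?_⟩)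
    · exact hadjF 0
    · have h2 := hadjF 2
      have e : F (2 + 1) = F 0 := hper 0
      rw [e] at h2
      exact h2.symm
    · exact hadjF 1
  have hL5 : 5 ≤ L := by omega
  have gapb : ∀ (v : Fin n) (p g : ℕ), g ≤ L → G.Adj v (F p) → G.Adj v (F (p + g)) →
      (g % 2 = 1 ∧ L ≤ g + 2) ∨ (g % 2 = 0 ∧ g ≤ 2) := by
    intro v p g hgL h1 h2
    rcases Nat.even_or_odd g with he | ho
    · right
      refine ⟨Nat.even_iff.mp he, ?_⟩
      have h2' : G.Adj v (F (p + g + (L - g))) := by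
        have e : p + g + (L - g) = p + L := by omega
        rw [e, hper]
        exact h1
      have hodd' : Odd (L - g + 2) := by
        rw [Nat.odd_iff]
        have := Nat.even_iff.mp he
        omega
      have := hmin _ hodd' (isCW_arc hadjF h2 h2')
      omega
    · left
      refine ⟨Nat.odd_iff.mp ho, ?_⟩
      exact hmin _ (by rw [Nat.odd_iff] at ho ⊢; omega) (isCW_arc hadjF h1 h2)
  have key : ∀ v : Fin n, ((Finset.range L).filter (fun i => G.Adj v (F i))).card ≤ 2 := by
    intro v
    by_contra hlt
    push_neg at hlt
    obtain ⟨a, ha, b, hb, c, hc, hab, hac, hbc⟩ := Finset.two_lt_card.mp hlt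
    simp only [Finset.mem_filter, Finset.mem_range] at ha hb hc
    set Q : ℕ → Prop := fun x => x < L ∧ G.Adj v (F x) with hQ
    have Qa : Q a := ha
    have Qb : Q b := hb
    have Qc : Q c := hc
    obtain ⟨i, j, k, hij, hjk, Qi, Qj, Qk⟩ :
        ∃ i j k, i < j ∧ j < k ∧ Q i ∧ Q j ∧ Q k := by
      rcases hab.lt_or_gt with h1 | h1 <;> rcases hbc.lt_or_gt with h2 | h2 <;>
        rcases hac.lt_or_gt with h3 | h3
      · exact ⟨a, b, c, h1, h2, Qa, Qb, Qc⟩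
      · omega
      · exact ⟨a, c, b, h3, h2, Qa, Qc, Qb⟩
      · exact ⟨c, a, b, h3, h1, Qc, Qa, Qb⟩
      · exact ⟨b, a, c, h1, h3, Qb, Qa, Qc⟩
      · exact ⟨b, c, a, h2, h3, Qb, Qc, Qa⟩
      · omega
      · exact ⟨c, b, a, h2, h1, Qc, Qb, Qa⟩
    have b1 := gapb v i (j - i) (by omega) Qi.2
      (by rw [show i + (j - i) = j by omega]; exact Qj.2)
    have b2 := gapb v j (k - j) (by omega) Qj.2
      (by rw [show j + (k - j) = k by omega]; exact Qk.2)
    have b3 := gapb v i (k - i) (by omega) Qi.2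
      (by rw [show i + (k - i) = k by omega]; exact Qk.2)
    have hkL : k < L := Qk.1
    omega
  have hcount : L * d ≤ 2 * n := by
    calc L * d = ∑ _i ∈ Finset.range L, d := by
          rw [Finset.sum_const, Finset.card_range, smul_eq_mul]
      _ = ∑ i ∈ Finset.range L, ∑ v : Fin n, ite (G.Adj (F i) v) 1 0 :=
          Finset.sum_congr rfl fun i _ => by rw [← hdeg (F i), Finset.card_filter]
      _ = ∑ v : Fin n, ∑ i ∈ Finset.range L, ite (G.Adj (F i) v) 1 0 := Finset.sum_comm
      _ = ∑ v : Fin n, ((Finset.range L).filter (fun i => G.Adj v (F i))).card := by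
          refine Finset.sum_congr rfl fun v _ => ?_
          rw [Finset.card_filter]
          exact Finset.sum_congr rfl fun i _ => if_congr (G.adj_comm _ _) rfl rfl
      _ ≤ ∑ _v : Fin n, 2 := Finset.sum_le_sum fun v _ => key v
      _ = 2 * n := by
          rw [Finset.sum_const, Finset.card_univ, Fintype.card_fin, smul_eq_mul, mul_comm]
  have h5 : 5 * d ≤ 2 * n := le_trans (Nat.mul_le_mul_right d hL5) hcount
  have h5' : (5 : ℝ) * d ≤ 2 * n := by exact_mod_cast h5
  linarith
end
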